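/- arXiv:2108.02185 — 5 statements merged into one kernel-verified Lean document; each statement's English description precedes it below -/
import Mathlib

section
/- Let G be a graph with n vertices, let q be a configuration of n vectors in R^{d+1} with Gram matrix S = Q^T Q, and suppose there exists a nonzero positive semidefinite linear equilibrium stress matrix Ω for q (i.e., Ω is symmetric, supported on the diagonal and edges of G, PSD, nonzero, and Ω Q^T = 0). Then the function g(K) = tr(SK) − log det K, restricted to positive definite matrices K whose off-diagonal support lies in the edges of G, is unbounded below; in fact g(I + tΩ) → −∞ as t → ∞. -/
open Matrix Filter

/-- If the vector configuration `q` (with Gram matrix `S = Qᵀ * Q`) admits a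
nonzero PSD linear equilibrium stress matrix `Ω` supported on the diagonal and the edges
of `G`, then the objective `g(K) = tr(S K) - log det K` of the Gram MLT optimization
problem is unbounded below on the feasible set; in fact `g(I + tΩ) → -∞` as `t → ∞`. -/
theorem stmt1 (n d : ℕ) (G : SimpleGraph (Fin n))
    (q : Fin n → Fin (d + 1) → ℝ)
    (S : Matrix (Fin n) (Fin n) ℝ)
    (hS : S = (Matrix.of fun (k : Fin (d + 1)) (i : Fin n) => q i k)ᵀ *
              (Matrix.of fun (k : Fin (d + 1)) (i : Fin n) => q i k))
    (Ω : Matrix (Fin n) (Fin n) ℝ) (hne : Ω ≠ 0) (hpsd : Ω.PosSemidef)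
    (hsupp : ∀ i j, i ≠ j → ¬ G.Adj i j → Ω i j = 0)
    (hstress : Ω * (Matrix.of fun (i : Fin n) (k : Fin (d + 1)) => q i k) = 0) :
    Tendsto (fun t : ℝ => Matrix.trace (S * (1 + t • Ω)) - Real.log (1 + t • Ω).det)
      atTop atBot ∧
    ¬ BddBelow ((fun K : Matrix (Fin n) (Fin n) ℝ => Matrix.trace (S * K) - Real.log K.det) ''
        {K : Matrix (Fin n) (Fin n) ℝ | K.PosDef ∧ ∀ i j, i ≠ j → ¬ G.Adj i j → K i j = 0}) := by
  have hH := hpsd.1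
  -- abbreviations
  set Q : Matrix (Fin (d + 1)) (Fin n) ℝ := Matrix.of fun k i => q i k with hQ
  -- S * Ω = 0
  have hQt : (Matrix.of fun (i : Fin n) (k : Fin (d + 1)) => q i k) = Qᵀ := rfl
  have hQΩ : Q * Ω = 0 := by
    have h1 : (Ω * Qᵀ)ᵀ = 0 := by rw [← hQt, hstress]; simp
    rw [Matrix.transpose_mul, Matrix.transpose_transpose] at h1
    have hΩt : Ωᵀ = Ω := hH
    rwa [hΩt] at h1
  have hSΩ : S * Ω = 0 := by rw [hS, Matrix.mul_assoc, hQΩ, Matrix.mul_zero]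
  -- trace is constant
  have htrace : ∀ t : ℝ, Matrix.trace (S * (1 + t • Ω)) = Matrix.trace S := by
    intro t
    rw [mul_add, mul_one, Matrix.mul_smul, hSΩ, smul_zero, add_zero]
  -- det formula
  have hdet : ∀ t : ℝ, (1 + t • Ω).det = ∏ i, (1 + t * hH.eigenvalues i) := by
    intro t
    set U : Matrix (Fin n) (Fin n) ℝ := (hH.eigenvectorUnitary : Matrix (Fin n) (Fin n) ℝ)
    have hUU : U * star U = 1 := (Matrix.mem_unitaryGroup_iff).mp hH.eigenvectorUnitary.2
    have hdecomp : 1 + t • Ω = U * diagonal (fun i => 1 + t * hH.eigenvalues i) * star U := by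
      have hspec := hH.spectral_theorem
      rw [Unitary.conjStarAlgAut_apply] at hspec
      have hdiag : diagonal (fun i => 1 + t * hH.eigenvalues i)
          = 1 + t • diagonal (RCLike.ofReal ∘ hH.eigenvalues) := by
        ext i j
        by_cases h : i = j <;>
          simp [h, diagonal, Matrix.one_apply, Matrix.smul_apply, RCLike.ofReal]
      rw [hdiag, mul_add, add_mul, mul_one, hUU, Matrix.mul_smul, Matrix.smul_mul, ← hspec]
    rw [hdecomp, det_mul_right_comm, hUU, one_mul, det_diagonal]
  -- eigenvalues nonneg
  have hev : ∀ i, 0 ≤ hH.eigenvalues i := hpsd.eigenvalues_nonneg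
  -- some eigenvalue positive
  obtain ⟨j, hj⟩ : ∃ j, 0 < hH.eigenvalues j := by
    by_contra h
    push_neg at h
    have hz : ∀ i, hH.eigenvalues i = 0 := fun i => le_antisymm (h i) (hev i)
    apply hne
    have hspec := hH.spectral_theorem
    rw [Unitary.conjStarAlgAut_apply] at hspec
    have : diagonal (RCLike.ofReal ∘ hH.eigenvalues) = (0 : Matrix (Fin n) (Fin n) ℝ) := by
      ext i k
      by_cases h' : i = k <;> simp [h', diagonal, hz, RCLike.ofReal]
    rw [hspec, this, Matrix.mul_zero, Matrix.zero_mul]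
  -- lower bound on det for t ≥ 0
  have hdetge : ∀ t : ℝ, 0 ≤ t → 1 + t * hH.eigenvalues j ≤ (1 + t • Ω).det := by
    intro t ht
    rw [hdet t]
    calc 1 + t * hH.eigenvalues j
        = ∏ i, (if i = j then 1 + t * hH.eigenvalues j else 1) := by simp
      _ ≤ ∏ i, (1 + t * hH.eigenvalues i) := by
          apply Finset.prod_le_prod
          · intro i _
            split <;> positivity
          · intro i _
            split
            · next h => rw [h]
            · nlinarith [hev i, mul_nonneg ht (hev i)]
  -- the main tendsto
  have hmain : Tendsto (fun t : ℝ => Matrix.trace (S * (1 + t • Ω)) - Real.log (1 + t • Ω).det)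
      atTop atBot := by
    have h1 : Tendsto (fun t : ℝ => 1 + t * hH.eigenvalues j) atTop atTop := by
      apply tendsto_atTop_add_const_left
      exact Tendsto.atTop_mul_const hj tendsto_id
    have h2 : Tendsto (fun t : ℝ => Real.log (1 + t * hH.eigenvalues j)) atTop atTop :=
      Real.tendsto_log_atTop.comp h1
    have h3 : Tendsto (fun t : ℝ => Matrix.trace S - Real.log (1 + t * hH.eigenvalues j))
        atTop atBot := by
      apply tendsto_atBot_add_const_left
      exact tendsto_neg_atBot_iff.mpr h2
    apply tendsto_atBot_mono' _ _ h3
    filter_upwards [eventually_ge_atTop (0 : ℝ)] with t ht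
    have hle := hdetge t ht
    have hpos : (0 : ℝ) < 1 + t * hH.eigenvalues j := by positivity
    have := Real.log_le_log hpos hle
    rw [htrace t]
    linarith
  refine ⟨hmain, ?_⟩
  -- unboundedness
  rintro ⟨b, hb⟩
  have hmem : ∀ t : ℝ, 0 ≤ t →
      b ≤ Matrix.trace (S * (1 + t • Ω)) - Real.log (1 + t • Ω).det := by
    intro t ht
    apply hb
    refine ⟨1 + t • Ω, ⟨?_, ?_⟩, rfl⟩
    · refine Matrix.PosDef.add_posSemidef Matrix.PosDef.one (Matrix.PosSemidef.of_dotProduct_mulVec_nonneg ?_ ?_)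
      · show (t • Ω)ᴴ = t • Ω
        rw [conjTranspose_smul, hH.eq, star_trivial]
      · intro x
        rw [smul_mulVec, dotProduct_smul, smul_eq_mul]
        exact mul_nonneg ht (hpsd.dotProduct_mulVec_nonneg x)
    · intro i k hik hadj
      simp [Matrix.add_apply, Matrix.one_apply_ne hik, Matrix.smul_apply, hsupp i k hik hadj]
  have := (hmain.eventually (eventually_lt_atBot b)).and (eventually_ge_atTop (0:ℝ))
  obtain ⟨t, hlt, ht⟩ := this.exists
  exact absurd (hmem t ht) (not_le.mpr hlt)
end

section
/- Let C_n be the cycle on vertices 1,...,n and let (C_n, p) be a framework in R^1 with the points p(1),...,p(n) pairwise distinct, such that the edge {1,n} is backwards (p(1) < p(n)) and p(n) is the rightmost point. Then (C_n,p) has a one-dimensional space of equilibrium stresses, and there is an equilibrium stress ω such that ω_{i,i+1} > 0 for every forward edge (p(i) < p(i+1)) and ω_{i,i+1} < 0 for every backward edge (p(i) > p(i+1)), where indices are cyclic and the edge {1, n} has coefficient −1. -/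
/-- `ω` (assigning `ω i` to the cycle edge `{i, i+1}`, indices cyclic) is an equilibrium
stress of the one-dimensional cycle framework `(C_{n+3}, p)`. -/
def IsCycleEquilStress (n : ℕ) (p : Fin (n + 3) → ℝ) (ω : Fin (n + 3) → ℝ) : Prop :=
  ∀ i : Fin (n + 3), ω i * (p (i + 1) - p i) + ω (i - 1) * (p (i - 1) - p i) = 0

open Fin.CommRing in
lemma cycle_const {m : ℕ} [NeZero m] (f : Fin m → ℝ) (h : ∀ j, f (j + 1) = f j) :
    ∀ i, f i = f 0 := by
  have key : ∀ k : ℕ, f (k : Fin m) = f 0 := by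
    intro k
    induction k with
    | zero => simp
    | succ k ih =>
      have : ((k + 1 : ℕ) : Fin m) = (k : Fin m) + 1 := by push_cast; ring
      rw [this, h, ih]
  intro i
  rw [← Fin.cast_val_eq_self i]
  exact key i.val

/-- For a cycle framework in `ℝ¹` with pairwise distinct points, where the
closing edge `{first, last}` is backwards (`p 0 < p last`) and `p last` is rightmost, the
space of equilibrium stresses is one-dimensional, and there is an equilibrium stress with
coefficient `-1` on the closing edge which is positive on every forwards edge and negative
on every backwards edge. -/
theorem stmt7 (n : ℕ) (p : Fin (n + 3) → ℝ) (hinj : Function.Injective p)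
    (hback : p 0 < p (Fin.last (n + 2)))
    (hmax : ∀ i, p i ≤ p (Fin.last (n + 2))) :
    (∃ ω₀ : Fin (n + 3) → ℝ, ω₀ ≠ 0 ∧ IsCycleEquilStress n p ω₀ ∧
      ∀ ω : Fin (n + 3) → ℝ, IsCycleEquilStress n p ω → ∃ c : ℝ, ω = c • ω₀) ∧
    (∃ ω : Fin (n + 3) → ℝ, IsCycleEquilStress n p ω ∧
      ω (Fin.last (n + 2)) = -1 ∧
      (∀ i, p i < p (i + 1) → 0 < ω i) ∧
      (∀ i, p (i + 1) < p i → ω i < 0)) := by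
  set d : Fin (n + 3) → ℝ := fun i => p (i + 1) - p i with hd_def
  have hd : ∀ i, d i ≠ 0 := by
    intro i
    apply sub_ne_zero.mpr
    intro h
    have : i + 1 = i := hinj h
    have h1 : i + 1 = i + 0 := by simpa using this
    exact one_ne_zero (add_left_cancel h1)
  -- characterization of equilibrium stresses
  have hchar : ∀ ω : Fin (n + 3) → ℝ, IsCycleEquilStress n p ω ↔
      ∀ i : Fin (n + 3), ω i * d i = ω (i - 1) * d (i - 1) := by
    intro ω
    constructor
    · intro h i
      have h1 := h i
      have h2 : ((i - 1 : Fin (n+3)) + 1) = i := sub_add_cancel i 1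
      simp only [hd_def, h2]
      linarith
    · intro h i
      have h1 := h i
      have h2 : ((i - 1 : Fin (n+3)) + 1) = i := sub_add_cancel i 1
      simp only [hd_def, h2] at h1
      linarith
  -- any stress has ω i * d i constant
  have hconst : ∀ ω : Fin (n + 3) → ℝ, IsCycleEquilStress n p ω →
      ∀ i, ω i * d i = ω 0 * d 0 := by
    intro ω hω
    apply cycle_const
    intro j
    have := (hchar ω).mp hω (j + 1)
    simpa using this
  -- stresses of the form t / d i
  have hmk : ∀ t : ℝ, IsCycleEquilStress n p (fun i => t / d i) := by
    intro t
    rw [hchar]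
    intro i
    rw [div_mul_cancel₀ _ (hd i), div_mul_cancel₀ _ (hd (i - 1))]
  constructor
  · refine ⟨fun i => 1 / d i, ?_, hmk 1, ?_⟩
    · intro h
      have := congrFun h 0
      simp only [Pi.zero_apply] at this
      exact hd 0 (by simpa using this)
    · intro ω hω
      refine ⟨ω 0 * d 0, ?_⟩
      funext i
      have := hconst ω hω i
      have hdi := hd i
      simp only [Pi.smul_apply, smul_eq_mul]
      field_simp
      linarith [this]
  · set t : ℝ := p (Fin.last (n + 2)) - p 0 with ht_def
    have ht : 0 < t := by simp [ht_def]; linarith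
    refine ⟨fun i => t / d i, hmk t, ?_, ?_, ?_⟩
    · have hlast : d (Fin.last (n + 2)) = -t := by
        simp only [hd_def, ht_def]
        rw [Fin.last_add_one]
        ring
      show t / d (Fin.last (n + 2)) = -1
      rw [hlast, div_neg, div_self ht.ne']
    · intro i hi
      exact div_pos ht (by simp only [hd_def]; linarith)
    · intro i hi
      exact div_neg_of_pos_of_neg ht (by simp only [hd_def]; linarith)
end

section
/- Let 1 ≤ k ≤ d+1 and let the graph G be a k-sum of induced subgraphs G_1 and G_2 (i.e., G = G_1 ∪ G_2 and G_1 ∩ G_2 ≅ K_k). Let (G,p) be a d-dimensional framework in which the k vertices of G_1 ∩ G_2 are affinely independent. Let S be the space of equilibrium stresses of (G,p), and let S_i be the subspace of equilibrium stresses supported on the edges of G_i. Then S = S_1 ⊕ S_2. -/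
/-- The subgraph of `G` induced on the vertex set `A` (kept on the same vertex type). -/
def restrictG {V : Type*} (G : SimpleGraph V) (A : Finset V) : SimpleGraph V where
  Adj u w := G.Adj u w ∧ u ∈ A ∧ w ∈ A
  symm := ⟨fun u w h => ⟨h.1.symm, h.2.2, h.2.1⟩⟩
  loopless := ⟨fun u h => G.loopless.irrefl u h.1⟩

/-- `ω` is an equilibrium stress of the `d`-dimensional framework `(G, p)`. -/
def IsStressOf {n : ℕ} (d : ℕ) (G : SimpleGraph (Fin n)) (p : Fin n → Fin d → ℝ)
    (ω : Fin n → Fin n → ℝ) : Prop :=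
  (∀ i j, ω i j = ω j i) ∧ (∀ i j, ¬ G.Adj i j → ω i j = 0) ∧
  (∀ i, ∑ j, ω i j • (p j - p i) = 0)

local notation "⟪" x ", " y "⟫" => @inner ℝ _ _ x y

lemma dual_family {ι : Type*} [Fintype ι] [DecidableEq ι] {d : ℕ}
    (q : ι → EuclideanSpace ℝ (Fin d)) (hq : LinearIndependent ℝ q) :
    ∃ r : ι → EuclideanSpace ℝ (Fin d), ∀ j m, ⟪r j, q m⟫ = if j = m then (1:ℝ) else 0 := by
  let Ψ : EuclideanSpace ℝ (Fin d) →ₗ[ℝ] EuclideanSpace ℝ ι :=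
    { toFun := fun x => WithLp.toLp 2 (fun j => ⟪q j, x⟫)
      map_add' := by intro x y; ext j; simp [inner_add_right]
      map_smul' := by intro c x; ext j; simp [inner_smul_right] }
  have hsurj : Function.Surjective Ψ := by
    rw [← LinearMap.range_eq_top, ← Submodule.orthogonal_eq_bot_iff]
    rw [Submodule.eq_bot_iff]
    intro c hc
    rw [Submodule.mem_orthogonal] at hc
    have h1 : ⟪(∑ j, c j • q j : EuclideanSpace ℝ (Fin d)), ∑ j, c j • q j⟫ = 0 := by
      have h2 := hc (Ψ (∑ j, c j • q j)) (LinearMap.mem_range_self _ _)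
      have h3 : ⟪Ψ (∑ j, c j • q j), c⟫ = ⟪(∑ j, c j • q j : EuclideanSpace ℝ (Fin d)), ∑ j, c j • q j⟫ := by
        rw [sum_inner]
        simp only [inner_smul_left, conj_trivial]
        rw [PiLp.inner_apply]
        simp only [RCLike.inner_apply, conj_trivial, Ψ, LinearMap.coe_mk, AddHom.coe_mk]
      rw [h3] at h2; exact h2
    have h4 : (∑ j, c j • q j : EuclideanSpace ℝ (Fin d)) = 0 := by
      rwa [inner_self_eq_zero] at h1
    have h5 := Fintype.linearIndependent_iff.mp hq c h4
    ext j; exact h5 j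
  choose r hr using fun j => hsurj (WithLp.toLp 2 (fun m => if j = m then (1:ℝ) else 0))
  refine ⟨r, fun j m => ?_⟩
  have := congrArg (fun z : EuclideanSpace ℝ ι => z.ofLp m) (hr j)
  simp only [Ψ, LinearMap.coe_mk, AddHom.coe_mk] at this
  rw [real_inner_comm]
  exact this

lemma skew_extend {ι : Type*} [Fintype ι] [DecidableEq ι] {d : ℕ}
    (q v : ι → EuclideanSpace ℝ (Fin d)) (hq : LinearIndependent ℝ q)
    (hv : ∀ j m, ⟪v j, q m⟫ + ⟪v m, q j⟫ = 0) :
    ∃ L : EuclideanSpace ℝ (Fin d) →ₗ[ℝ] EuclideanSpace ℝ (Fin d),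
      (∀ x, ⟪L x, x⟫ = 0) ∧ ∀ m, L (q m) = v m := by
  obtain ⟨r, hr⟩ := dual_family q hq
  set t : ι → EuclideanSpace ℝ (Fin d) :=
    fun j => v j - (1/2 : ℝ) • (∑ l, ⟪q l, v j⟫ • r l) with ht
  refine ⟨{ toFun := fun x => ∑ j, (⟪r j, x⟫ • t j - ⟪t j, x⟫ • r j)
            map_add' := by
              intro x y
              rw [← Finset.sum_add_distrib]
              refine Finset.sum_congr rfl fun j _ => ?_
              rw [inner_add_right, inner_add_right, add_smul, add_smul]
              abel
            map_smul' := by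
              intro c x
              simp only [inner_smul_right, RingHom.id_apply, Finset.smul_sum, smul_sub,
                smul_smul] }, ?_, ?_⟩
  · intro x
    simp only [LinearMap.coe_mk, AddHom.coe_mk]
    rw [sum_inner]
    rw [Finset.sum_eq_zero]
    intro j _
    rw [inner_sub_left, inner_smul_left, inner_smul_left]
    simp only [conj_trivial]
    ring
  · intro m
    simp only [LinearMap.coe_mk, AddHom.coe_mk]
    have h1 : ∀ j, ⟪r j, q m⟫ • t j = (if j = m then (1:ℝ) else 0) • t j := by
      intro j; rw [hr]
    have h2 : ∀ j, ⟪t j, q m⟫ = (1/2 : ℝ) * ⟪v j, q m⟫ := by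
      intro j
      rw [ht]
      simp only
      rw [inner_sub_left, inner_smul_left, sum_inner]
      simp only [inner_smul_left, conj_trivial, hr]
      have : ∑ l, ⟪q l, v j⟫ * (if l = m then (1:ℝ) else 0) = ⟪q m, v j⟫ := by
        rw [Finset.sum_eq_single m]
        · simp
        · intro l _ hl; simp [hl]
        · intro h; exact absurd (Finset.mem_univ m) h
      rw [this, real_inner_comm (q m) (v j)]
      ring
    calc ∑ j, (⟪r j, q m⟫ • t j - ⟪t j, q m⟫ • r j)
        = ∑ j, ((if j = m then (1:ℝ) else 0) • t j - ((1/2 : ℝ) * ⟪v j, q m⟫) • r j) := by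
          refine Finset.sum_congr rfl fun j _ => ?_; rw [h1, h2]
      _ = t m - (1/2 : ℝ) • ∑ j, ⟪v j, q m⟫ • r j := by
          rw [Finset.sum_sub_distrib]
          congr 1
          · rw [show (∑ j, (if j = m then (1:ℝ) else 0) • t j) = ∑ j, (if j = m then t j else 0) by
              refine Finset.sum_congr rfl fun j _ => ?_
              split_ifs <;> simp]
            rw [Finset.sum_ite_eq' Finset.univ m (fun j => t j)]
            simp
          · rw [Finset.smul_sum]
            refine Finset.sum_congr rfl fun j _ => ?_
            rw [smul_smul]
      _ = v m := by
          have h3 : ∀ j, ⟪v j, q m⟫ = -⟪q j, v m⟫ := by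
            intro j
            have h := hv j m
            have h2' := real_inner_comm (v m) (q j)
            linarith
          rw [ht]
          simp only
          rw [sub_eq_iff_eq_add]
          rw [show (∑ j, ⟪v j, q m⟫ • r j) = -∑ j, ⟪q j, v m⟫ • r j by
            rw [← Finset.sum_neg_distrib]
            refine Finset.sum_congr rfl fun j _ => ?_
            rw [h3]; rw [neg_smul]]
          module

lemma inner_toLp {d : ℕ} (x y : Fin d → ℝ) :
    ⟪(WithLp.equiv 2 (Fin d → ℝ)).symm x, (WithLp.equiv 2 (Fin d → ℝ)).symm y⟫
      = ∑ a, x a * y a := by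
  simp [PiLp.inner_apply, RCLike.inner_apply]
  exact Finset.sum_congr rfl fun _ _ => mul_comm _ _

lemma flex_extend {n d : ℕ} (Cs : Finset (Fin n)) (hne : Cs.Nonempty)
    (p : Fin n → Fin d → ℝ)
    (haff : AffineIndependent ℝ (fun i : ↥Cs => p i))
    (u : Fin n → Fin d → ℝ)
    (hu : ∀ i ∈ Cs, ∀ j ∈ Cs, ∑ a, (p i a - p j a) * (u i a - u j a) = 0) :
    ∃ w : Fin n → Fin d → ℝ, (∀ i j, ∑ a, (p i a - p j a) * (w i a - w j a) = 0)
      ∧ ∀ i ∈ Cs, w i = u i := by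
  classical
  obtain ⟨i₀f, hi₀⟩ := hne
  set i₀ : ↥Cs := ⟨i₀f, hi₀⟩ with hi₀def
  set toL : (Fin d → ℝ) ≃ₗ[ℝ] EuclideanSpace ℝ (Fin d) :=
    (WithLp.linearEquiv 2 ℝ (Fin d → ℝ)).symm with htoL
  set q : {x : ↥Cs // x ≠ i₀} → EuclideanSpace ℝ (Fin d) :=
    fun j => toL (p ↑↑j - p i₀f) with hqdef
  set v : {x : ↥Cs // x ≠ i₀} → EuclideanSpace ℝ (Fin d) :=
    fun j => toL (u ↑↑j - u i₀f) with hvdef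
  have hli : LinearIndependent ℝ q := by
    have h1 := (affineIndependent_iff_linearIndependent_vsub ℝ (fun i : ↥Cs => p i) i₀).mp haff
    have h2 := h1.map' toL.toLinearMap toL.ker
    exact h2
  have key : ∀ (x y : Fin n), ⟪toL (p x - p y), toL (u x - u y)⟫
      = ∑ a, (p x a - p y a) * (u x a - u y a) := by
    intro x y
    exact inner_toLp _ _
  have hv : ∀ j m, ⟪v j, q m⟫ + ⟪v m, q j⟫ = 0 := by
    intro j m
    have e1 : ⟪v j, q m⟫ = ∑ a, (u ↑↑j a - u i₀f a) * (p ↑↑m a - p i₀f a) := by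
      rw [hvdef, hqdef]; exact inner_toLp _ _
    have e2 : ⟪v m, q j⟫ = ∑ a, (u ↑↑m a - u i₀f a) * (p ↑↑j a - p i₀f a) := by
      rw [hvdef, hqdef]; exact inner_toLp _ _
    rw [e1, e2, ← Finset.sum_add_distrib]
    have f1 := hu ↑↑j j.1.2 i₀f hi₀
    have f2 := hu ↑↑m m.1.2 i₀f hi₀
    have f3 := hu ↑↑j j.1.2 ↑↑m m.1.2
    have expand : ∑ a, ((u ↑↑j a - u i₀f a) * (p ↑↑m a - p i₀f a)
          + (u ↑↑m a - u i₀f a) * (p ↑↑j a - p i₀f a))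
        = (∑ a, (p ↑↑j a - p i₀f a) * (u ↑↑j a - u i₀f a))
          + (∑ a, (p ↑↑m a - p i₀f a) * (u ↑↑m a - u i₀f a))
          - (∑ a, (p ↑↑j a - p ↑↑m a) * (u ↑↑j a - u ↑↑m a)) := by
      rw [← Finset.sum_add_distrib, ← Finset.sum_sub_distrib]
      exact Finset.sum_congr rfl fun a _ => by ring
    rw [expand, f1, f2, f3]; ring
  obtain ⟨L, hLskew, hLq⟩ := skew_extend q v hli hv
  refine ⟨fun i => toL.symm (L (toL (p i - p i₀f))) + u i₀f, ?_, ?_⟩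
  · intro i j
    have hdiff : ∀ a, (toL.symm (L (toL (p i - p i₀f))) + u i₀f) a
        - (toL.symm (L (toL (p j - p i₀f))) + u i₀f) a
        = (toL.symm (L (toL (p i - p j)))) a := by
      intro a
      have : toL (p i - p j) = toL (p i - p i₀f) - toL (p j - p i₀f) := by
        rw [← map_sub]; congr 1; abel
      rw [this, map_sub, map_sub]
      simp [Pi.add_apply, Pi.sub_apply]
    have : ∑ a, (p i a - p j a) * ((toL.symm (L (toL (p i - p i₀f))) + u i₀f) a
        - (toL.symm (L (toL (p j - p i₀f))) + u i₀f) a)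
        = ∑ a, (p i a - p j a) * (toL.symm (L (toL (p i - p j)))) a := by
      exact Finset.sum_congr rfl fun a _ => by rw [hdiff]
    rw [this]
    have e3 : ∑ a, (p i a - p j a) * (toL.symm (L (toL (p i - p j)))) a
        = ⟪toL (p i - p j), L (toL (p i - p j))⟫ := by
      rw [PiLp.inner_apply]
      refine Finset.sum_congr rfl fun a _ => ?_
      simp [htoL, mul_comm]
    rw [e3, real_inner_comm]
    exact hLskew _
  · intro i hi
    by_cases hii : i = i₀f
    · subst hii
      funext a
      simp
    · have hjj : (⟨i, hi⟩ : ↥Cs) ≠ i₀ := by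
        intro h; exact hii (congrArg Subtype.val h)
      set jj : {x : ↥Cs // x ≠ i₀} := ⟨⟨i, hi⟩, hjj⟩ with hjjdef
      show toL.symm (L (toL (p i - p i₀f))) + u i₀f = u i
      have hq1 : toL (p i - p i₀f) = q jj := by rw [hqdef]
      rw [hq1, hLq jj, hvdef]
      simp only [LinearEquiv.symm_apply_apply]
      funext a
      simp [hjjdef]

lemma no_stress_of_affine_indep {n d : ℕ} (Cs : Finset (Fin n)) (p : Fin n → Fin d → ℝ)
    (haff : AffineIndependent ℝ (fun i : ↥Cs => p i))
    (ω : Fin n → Fin n → ℝ)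
    (hsupp : ∀ i j, ω i j ≠ 0 → i ∈ Cs ∧ j ∈ Cs ∧ i ≠ j)
    (heq : ∀ i, ∑ j, ω i j • (p j - p i) = 0) : ω = 0 := by
  classical
  funext i j
  show ω i j = 0
  by_contra hne
  obtain ⟨hiC, hjC, hij⟩ := hsupp i j hne
  -- weights on ↥Cs
  set wt : ↥Cs → ℝ := fun l => if (l : Fin n) = i then ω i i - ∑ m, ω i m else ω i (l : Fin n)
    with hwt
  have hsum0 : ∀ (m : Fin n), m ∉ Cs → ω i m = 0 := by
    intro m hm
    by_contra h
    exact hm (hsupp i m h).2.1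
  have e0 : ∀ l : ↥Cs, wt l = ω i ↑l - (if (l : Fin n) = i then ∑ m, ω i m else 0) := by
    intro l
    rw [hwt]
    by_cases h : (l : Fin n) = i
    · simp only [h, if_true]
    · simp only [h, if_false, sub_zero]
  have hsumCs : ∑ l : ↥Cs, ω i ↑l = ∑ m, ω i m := by
    rw [Finset.sum_coe_sort Cs (fun m => ω i m)]
    exact Finset.sum_subset (Finset.subset_univ Cs) (fun m _ hm => hsum0 m hm)
  have hite : ∑ l : ↥Cs, (if (l : Fin n) = i then (∑ m, ω i m) else 0) = ∑ m, ω i m := by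
    rw [Finset.sum_coe_sort Cs (fun l => if l = i then (∑ m, ω i m) else 0)]
    rw [Finset.sum_ite_eq' Cs i (fun _ => ∑ m, ω i m)]
    simp [hiC]
  have hSZ : ∑ l : ↥Cs, wt l = 0 := by
    calc ∑ l : ↥Cs, wt l
        = ∑ l : ↥Cs, (ω i ↑l - (if (l : Fin n) = i then ∑ m, ω i m else 0)) :=
          Finset.sum_congr rfl fun l _ => e0 l
      _ = (∑ l : ↥Cs, ω i ↑l) - ∑ l : ↥Cs, (if (l : Fin n) = i then (∑ m, ω i m) else 0) :=
          Finset.sum_sub_distrib _ _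
      _ = 0 := by rw [hsumCs, hite, sub_self]
  have hWrel : ∑ l : ↥Cs, wt l • (p ↑l - p i) = 0 := by
    calc ∑ l : ↥Cs, wt l • (p ↑l - p i)
        = ∑ l : ↥Cs, ω i ↑l • (p ↑l - p i) := by
          refine Finset.sum_congr rfl fun l _ => ?_
          rw [e0, sub_smul]
          by_cases h : (l : Fin n) = i
          · simp [h]
          · simp [h]
      _ = ∑ m, ω i m • (p m - p i) := by
          rw [Finset.sum_coe_sort Cs (fun m => ω i m • (p m - p i))]
          refine Finset.sum_subset (Finset.subset_univ Cs) (fun m _ hm => ?_)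
          rw [hsum0 m hm, zero_smul]
      _ = 0 := heq i
  have hW : ∑ l ∈ (Finset.univ : Finset ↥Cs), wt l • (fun i : ↥Cs => p ↑i) l = 0 := by
    calc ∑ l ∈ (Finset.univ : Finset ↥Cs), wt l • (fun i : ↥Cs => p ↑i) l
        = (∑ l : ↥Cs, wt l • (p ↑l - p i)) + (∑ l : ↥Cs, wt l) • p i := by
          rw [Finset.sum_smul, ← Finset.sum_add_distrib]
          refine Finset.sum_congr rfl fun l _ => ?_
          show wt l • p ↑l = _
          rw [smul_sub]
          abel
      _ = 0 := by rw [hWrel, hSZ, zero_smul, add_zero]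
  have hz := affineIndependent_iff.mp haff Finset.univ wt hSZ hW ⟨j, hjC⟩ (Finset.mem_univ _)
  rw [hwt] at hz
  simp only at hz
  rw [if_neg (fun h => hij h.symm)] at hz
  exact hne hz


/-- If `1 ≤ k ≤ d+1` and `G` is a `k`-sum of induced subgraphs `G₁` (on `A`)
and `G₂` (on `B`), and `(G,p)` is a `d`-dimensional framework whose `k` shared vertices are
affinely independent, then the space of equilibrium stresses of `(G,p)` is the direct sum
of the subspaces of stresses supported on the edges of `G₁` and of `G₂`. -/
theorem stmt10 (n d k : ℕ) (hk1 : 1 ≤ k) (hk2 : k ≤ d + 1)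
    (G : SimpleGraph (Fin n)) (A B : Finset (Fin n))
    (hcover : A ∪ B = Finset.univ)
    (hcard : (A ∩ B).card = k)
    (hA : k + 1 ≤ A.card) (hB : k + 1 ≤ B.card)
    (hedges : ∀ i j, G.Adj i j → (i ∈ A ∧ j ∈ A) ∨ (i ∈ B ∧ j ∈ B))
    (hcomplete : ∀ i ∈ A ∩ B, ∀ j ∈ A ∩ B, i ≠ j → G.Adj i j)
    (p : Fin n → Fin d → ℝ)
    (haff : AffineIndependent ℝ (fun i : ↥(A ∩ B) => p i)) :
    (∀ ω : Fin n → Fin n → ℝ, IsStressOf d G p ω →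
      ∃ ω₁ ω₂ : Fin n → Fin n → ℝ,
        IsStressOf d (restrictG G A) p ω₁ ∧ IsStressOf d (restrictG G B) p ω₂ ∧
        ω = ω₁ + ω₂) ∧
    (∀ ω₁ ω₂ : Fin n → Fin n → ℝ,
      IsStressOf d (restrictG G A) p ω₁ → IsStressOf d (restrictG G B) p ω₂ →
      ω₁ + ω₂ = 0 → ω₁ = 0 ∧ ω₂ = 0) := by
  classical
  have hne : (A ∩ B).Nonempty := Finset.card_pos.mp (by rw [hcard]; exact hk1)
  constructor
  · rintro ω ⟨hsym, hsupp, heq⟩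
    have hadj : ∀ i j, ω i j ≠ 0 → G.Adj i j := by
      intro i j h
      by_contra hn
      exact h (hsupp i j hn)
    set ωA : Fin n → Fin n → ℝ := fun i j =>
      if i ∈ A ∧ j ∈ A ∧ ¬(i ∈ A ∩ B ∧ j ∈ A ∩ B) then ω i j else 0 with hωA
    have hωAsym : ∀ i j, ωA i j = ωA j i := by
      intro i j
      rw [hωA]
      simp only
      rw [hsym i j]
      by_cases h : i ∈ A ∧ j ∈ A ∧ ¬(i ∈ A ∩ B ∧ j ∈ A ∩ B)
      · rw [if_pos h, if_pos ⟨h.2.1, h.1, fun hc => h.2.2 ⟨hc.2, hc.1⟩⟩]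
      · rw [if_neg h, if_neg (fun hc => h ⟨hc.2.1, hc.1, fun hd => hc.2.2 ⟨hd.2, hd.1⟩⟩)]
    -- termwise equality off the shared set
    have hterm : ∀ i, i ∈ A → i ∉ B → ∀ j a,
        ωA i j * (p j a - p i a) = ω i j * (p j a - p i a) := by
      intro i hiA hiB j a
      by_cases h0 : ω i j = 0
      · rw [hωA]
        simp only
        split_ifs with h
        · rfl
        · rw [h0, zero_mul]
      · have hadj' := hadj i j h0
        have hAB := hedges i j hadj'
        have hjA : j ∈ A := by
          rcases hAB with h' | h'
          · exact h'.2
          · exact absurd h'.1 hiB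
        have : ωA i j = ω i j := by
          rw [hωA]
          simp only
          rw [if_pos ⟨hiA, hjA, fun hc => hiB (Finset.mem_inter.mp hc.1).2⟩]
        rw [this]
    have hf0 : ∀ i, i ∉ A ∩ B → ∀ a, ∑ j, ωA i j * (p j a - p i a) = 0 := by
      intro i hiC a
      by_cases hiA : i ∈ A
      · have hiB : i ∉ B := fun hB' => hiC (Finset.mem_inter.mpr ⟨hiA, hB'⟩)
        rw [Finset.sum_congr rfl (fun j _ => hterm i hiA hiB j a)]
        have := congrFun (heq i) a
        simpa [Finset.sum_apply, Pi.smul_apply, smul_eq_mul] using this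
      · apply Finset.sum_eq_zero
        intro j _
        rw [hωA]
        simp only
        rw [if_neg (fun hc => hiA hc.1), zero_mul]
    -- the linear map realizing stresses on the shared complete graph
    set T : (Fin n → Fin n → ℝ) →ₗ[ℝ] EuclideanSpace ℝ (Fin n × Fin d) :=
      { toFun := fun ν => WithLp.toLp 2 (fun x : Fin n × Fin d => ∑ j,
          (if x.1 ∈ A ∩ B ∧ j ∈ A ∩ B ∧ x.1 ≠ j then ν x.1 j + ν j x.1 else 0)
            * (p j x.2 - p x.1 x.2))
        map_add' := by
          intro ν ν'
          ext x
          show (∑ j : Fin n, (_ : ℝ)) = (∑ j : Fin n, (_ : ℝ)) + (∑ j : Fin n, (_ : ℝ))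
          rw [← Finset.sum_add_distrib]
          refine Finset.sum_congr rfl fun j _ => ?_
          split_ifs with h
          · simp only [Pi.add_apply]
            ring
          · ring
        map_smul' := by
          intro c ν
          ext x
          simp only [RingHom.id_apply, PiLp.smul_apply, Pi.smul_apply, smul_eq_mul]
          rw [Finset.mul_sum]
          refine Finset.sum_congr rfl fun j _ => ?_
          split_ifs with h <;> ring } with hT
    set f : EuclideanSpace ℝ (Fin n × Fin d) :=
      WithLp.toLp 2 (fun x : Fin n × Fin d => ∑ j, ωA x.1 j * (p j x.2 - p x.1 x.2)) with hf
    have hmem : f ∈ LinearMap.range T := by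
      rw [← Submodule.orthogonal_orthogonal (LinearMap.range T)]
      rw [Submodule.mem_orthogonal]
      intro u hu
      rw [Submodule.mem_orthogonal] at hu
      -- flex condition on the shared vertices
      have hflex : ∀ i ∈ A ∩ B, ∀ j ∈ A ∩ B,
          ∑ a, (p i a - p j a) * (u (i, a) - u (j, a)) = 0 := by
        intro i hiC j hjC
        by_cases hij : i = j
        · subst hij
          apply Finset.sum_eq_zero
          intro a _
          rw [sub_self, zero_mul]
        · have h0 := hu (T (fun a b => if a = i ∧ b = j then (1:ℝ) else 0))
            (LinearMap.mem_range_self _ _)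
          set g := T (fun a b => if a = i ∧ b = j then (1:ℝ) else 0) with hg0
          have hg : ∀ x : Fin n × Fin d, g x
              = (if x.1 = i then (p j x.2 - p i x.2) else 0)
                + (if x.1 = j then (p i x.2 - p j x.2) else 0) := by
            intro x
            have e1 : g x = ∑ m, ((if x.1 = i ∧ m = j then (p j x.2 - p i x.2) else 0)
                + (if x.1 = j ∧ m = i then (p i x.2 - p j x.2) else 0)) := by
              show (∑ m, (if x.1 ∈ A ∩ B ∧ m ∈ A ∩ B ∧ x.1 ≠ m then
                  ((if x.1 = i ∧ m = j then (1:ℝ) else 0)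
                    + (if m = i ∧ x.1 = j then (1:ℝ) else 0)) else 0)
                  * (p m x.2 - p x.1 x.2)) = _
              refine Finset.sum_congr rfl fun m _ => ?_
              by_cases h1 : x.1 = i ∧ m = j
              · simp [h1.1, h1.2, hiC, hjC, hij, Ne.symm hij]
              · by_cases h2 : x.1 = j ∧ m = i
                · simp [h2.1, h2.2, hiC, hjC, hij, Ne.symm hij]
                · rw [if_neg h1, if_neg (fun hc : m = i ∧ x.1 = j => h2 ⟨hc.2, hc.1⟩),
                    if_neg h2]
                  simp [h1, h2]
            rw [e1, Finset.sum_add_distrib]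
            congr 1
            · rw [Finset.sum_eq_single j]
              · simp
              · intro m _ hm
                rw [if_neg (fun hc => hm hc.2)]
              · intro h
                exact absurd (Finset.mem_univ j) h
            · rw [Finset.sum_eq_single i]
              · simp
              · intro m _ hm
                rw [if_neg (fun hc => hm hc.2)]
              · intro h
                exact absurd (Finset.mem_univ i) h
          rw [PiLp.inner_apply] at h0
          simp only [RCLike.inner_apply, conj_trivial] at h0
          rw [Fintype.sum_prod_type] at h0
          simp only [mul_comm (u.ofLp _)] at h0
          have e2 : ∀ (l : Fin n) (a : Fin d), g (l, a) * u (l, a)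
              = (if l = i then (p j a - p i a) * u (l, a) else 0)
                + (if l = j then (p i a - p j a) * u (l, a) else 0) := by
            intro l a
            rw [hg (l, a)]
            split_ifs <;> ring
          have e3 : ∀ l : Fin n, ∑ a, g (l, a) * u (l, a)
              = (if l = i then ∑ a, (p j a - p i a) * u (i, a) else 0)
                + (if l = j then ∑ a, (p i a - p j a) * u (j, a) else 0) := by
            intro l
            rw [Finset.sum_congr rfl (fun a _ => e2 l a), Finset.sum_add_distrib]
            congr 1
            · split_ifs with h
              · rw [h]
              · exact Finset.sum_const_zero
            · split_ifs with h
              · rw [h]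
              · exact Finset.sum_const_zero
          rw [Finset.sum_congr rfl (fun l _ => e3 l), Finset.sum_add_distrib] at h0
          rw [Finset.sum_ite_eq' Finset.univ i, Finset.sum_ite_eq' Finset.univ j] at h0
          simp only [Finset.mem_univ, if_true] at h0
          have expand : ∑ a, (p i a - p j a) * (u (i, a) - u (j, a))
              = -((∑ a, (p j a - p i a) * u (i, a)) + ∑ a, (p i a - p j a) * u (j, a)) := by
            rw [← Finset.sum_add_distrib, ← Finset.sum_neg_distrib]
            exact Finset.sum_congr rfl fun a _ => by ring
          rw [expand, h0, neg_zero]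
      obtain ⟨w, hwflex, hwagree⟩ := flex_extend (A ∩ B) hne p haff
        (fun i a => u (i, a)) hflex
      rw [PiLp.inner_apply]
      simp only [RCLike.inner_apply, conj_trivial]
      rw [Fintype.sum_prod_type]
      have step1 : ∀ l : Fin n, ∑ a, u (l, a) * f (l, a) = ∑ a, w l a * f (l, a) := by
        intro l
        by_cases hl : l ∈ A ∩ B
        · refine Finset.sum_congr rfl fun a _ => ?_
          rw [show w l a = u (l, a) from congrFun (hwagree l hl) a]
        · refine Finset.sum_congr rfl fun a _ => ?_
          have hfla : f (l, a) = 0 := by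
            show (∑ m, ωA l m * (p m a - p l a)) = 0
            exact hf0 l hl a
          rw [hfla, mul_zero, mul_zero]
      set F : Fin n → Fin n → ℝ := fun l m => ωA l m * ∑ a, (p m a - p l a) * w l a with hFd
      have step2 : ∀ l : Fin n, ∑ a, w l a * f (l, a) = ∑ m, F l m := by
        intro l
        have e4 : ∀ a, w l a * f (l, a) = ∑ m, ωA l m * ((p m a - p l a) * w l a) := by
          intro a
          show w l a * (∑ m, ωA l m * (p m a - p l a)) = _
          rw [Finset.mul_sum]
          exact Finset.sum_congr rfl fun m _ => by ring
        rw [Finset.sum_congr rfl (fun a _ => e4 a), Finset.sum_comm]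
        refine Finset.sum_congr rfl fun m _ => ?_
        show ∑ a, ωA l m * ((p m a - p l a) * w l a) = ωA l m * ∑ a, (p m a - p l a) * w l a
        rw [Finset.mul_sum]
      have key2 : ∀ l m, F l m + F m l = 0 := by
        intro l m
        have h1 := hwflex l m
        have comb : (∑ a, (p m a - p l a) * w l a) + (∑ a, (p l a - p m a) * w m a)
            = -∑ a, (p l a - p m a) * (w l a - w m a) := by
          rw [← Finset.sum_add_distrib, ← Finset.sum_neg_distrib]
          exact Finset.sum_congr rfl fun a _ => by ring
        rw [h1, neg_zero] at comb
        show ωA l m * (∑ a, (p m a - p l a) * w l a)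
            + ωA m l * (∑ a, (p l a - p m a) * w m a) = 0
        rw [hωAsym m l, ← mul_add, comb, mul_zero]
      have htot : ∑ l, ∑ m, F l m = 0 := by
        have h2 : (∑ l, ∑ m, F l m) + (∑ l, ∑ m, F m l) = 0 := by
          rw [← Finset.sum_add_distrib]
          have e5 : ∀ l, ((∑ m, F l m) + (∑ m, F m l)) = 0 := by
            intro l
            rw [← Finset.sum_add_distrib]
            rw [Finset.sum_congr rfl (fun m _ => key2 l m)]
            exact Finset.sum_const_zero
          rw [Finset.sum_congr rfl (fun l _ => e5 l)]
          exact Finset.sum_const_zero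
        have swap : ∑ l, ∑ m, F m l = ∑ l, ∑ m, F l m := Finset.sum_comm
        rw [swap] at h2
        linarith
      simp only [mul_comm (f.ofLp _)]
      rw [Finset.sum_congr rfl (fun l _ => (step1 l).trans (step2 l))]
      exact htot
    have hmem' : -f ∈ LinearMap.range T := Submodule.neg_mem _ hmem
    obtain ⟨ν, hν⟩ := hmem'
    set μ : Fin n → Fin n → ℝ := fun i j =>
      if i ∈ A ∩ B ∧ j ∈ A ∩ B ∧ i ≠ j then ν i j + ν j i else 0 with hμ
    have hμsym : ∀ i j, μ i j = μ j i := by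
      intro i j
      rw [hμ]
      simp only
      by_cases h : i ∈ A ∩ B ∧ j ∈ A ∩ B ∧ i ≠ j
      · rw [if_pos h, if_pos ⟨h.2.1, h.1, fun hc => h.2.2 hc.symm⟩]
        ring
      · rw [if_neg h, if_neg (fun hc => h ⟨hc.2.1, hc.1, fun hd => hc.2.2 hd.symm⟩)]
    have hμeq : ∀ i a, ∑ j, μ i j * (p j a - p i a) = -f (i, a) := by
      intro i a
      have := congrArg (fun z : EuclideanSpace ℝ (Fin n × Fin d) => z.ofLp (i, a)) hν
      exact this
    refine ⟨fun i j => ωA i j + μ i j, fun i j => ω i j - (ωA i j + μ i j), ?_, ?_, ?_⟩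
    · refine ⟨fun i j => by
          show ωA i j + μ i j = ωA j i + μ j i
          rw [hωAsym i j, hμsym i j], fun i j hn => ?_, fun i => ?_⟩
      · -- support in G₁
        show ωA i j + μ i j = 0
        have hωA0 : ωA i j = 0 := by
          rw [hωA]
          simp only
          split_ifs with h
          · by_cases h0 : ω i j = 0
            · exact h0
            · exact absurd ⟨hadj i j h0, h.1, h.2.1⟩ hn
          · rfl
        have hμ0 : μ i j = 0 := by
          rw [hμ]
          simp only
          split_ifs with h
          · exact absurd ⟨hcomplete i h.1 j h.2.1 h.2.2,
              (Finset.mem_inter.mp h.1).1, (Finset.mem_inter.mp h.2.1).1⟩ hn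
          · rfl
        rw [hωA0, hμ0, add_zero]
      · funext a
        simp only [Finset.sum_apply, Pi.smul_apply, Pi.sub_apply, smul_eq_mul, Pi.zero_apply]
        have e1 : ∑ j, (ωA i j + μ i j) * (p j a - p i a)
            = (∑ j, ωA i j * (p j a - p i a)) + ∑ j, μ i j * (p j a - p i a) := by
          rw [← Finset.sum_add_distrib]
          exact Finset.sum_congr rfl fun j _ => by ring
        rw [e1, hμeq i a]
        have : f (i, a) = ∑ j, ωA i j * (p j a - p i a) := rfl
        rw [← this]
        ring
    · refine ⟨fun i j => by
          show ω i j - (ωA i j + μ i j) = ω j i - (ωA j i + μ j i)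
          rw [hsym i j, hωAsym i j, hμsym i j], fun i j hn => ?_, fun i => ?_⟩
      · -- support in G₂
        show ω i j - (ωA i j + μ i j) = 0
        by_cases hGadj : G.Adj i j
        · have hAB := hedges i j hGadj
          have hnB : ¬(i ∈ B ∧ j ∈ B) := fun hc => hn ⟨hGadj, hc.1, hc.2⟩
          have hAonly : i ∈ A ∧ j ∈ A := by
            rcases hAB with h' | h'
            · exact h'
            · exact absurd h' hnB
          have hnC : ¬(i ∈ A ∩ B ∧ j ∈ A ∩ B) := by
            intro hc
            exact hnB ⟨(Finset.mem_inter.mp hc.1).2, (Finset.mem_inter.mp hc.2).2⟩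
          have hωAe : ωA i j = ω i j := by
            rw [hωA]
            simp only
            rw [if_pos ⟨hAonly.1, hAonly.2, hnC⟩]
          have hμ0 : μ i j = 0 := by
            rw [hμ]
            simp only
            rw [if_neg (fun hc => hnC ⟨hc.1, hc.2.1⟩)]
          rw [hωAe, hμ0]
          ring
        · have hω0 : ω i j = 0 := hsupp i j hGadj
          have hωA0 : ωA i j = 0 := by
            rw [hωA]
            simp only
            split_ifs
            · exact hω0
            · rfl
          have hμ0 : μ i j = 0 := by
            rw [hμ]
            simp only
            split_ifs with h
            · exact absurd (hcomplete i h.1 j h.2.1 h.2.2) hGadj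
            · rfl
          rw [hω0, hωA0, hμ0]
          ring
      · funext a
        simp only [Finset.sum_apply, Pi.smul_apply, Pi.sub_apply, smul_eq_mul, Pi.zero_apply]
        have e1 : ∑ j, (ω i j - (ωA i j + μ i j)) * (p j a - p i a)
            = (∑ j, ω i j * (p j a - p i a))
              - ((∑ j, ωA i j * (p j a - p i a)) + ∑ j, μ i j * (p j a - p i a)) := by
          rw [← Finset.sum_add_distrib, ← Finset.sum_sub_distrib]
          exact Finset.sum_congr rfl fun j _ => by ring
        rw [e1, hμeq i a]
        have e2 : f (i, a) = ∑ j, ωA i j * (p j a - p i a) := rfl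
        have e3 : ∑ j, ω i j * (p j a - p i a) = 0 := by
          have := congrFun (heq i) a
          simpa [Finset.sum_apply, Pi.smul_apply, smul_eq_mul] using this
        rw [e3, ← e2]
        ring
    · funext i j
      show ω i j = (ωA i j + μ i j) + (ω i j - (ωA i j + μ i j))
      ring

  · rintro ω₁ ω₂ ⟨s1, z1, e1⟩ ⟨s2, z2, e2⟩ hsum
    have hpt : ∀ i j, ω₂ i j = -ω₁ i j := by
      intro i j
      have := congrFun (congrFun hsum i) j
      simp only [Pi.add_apply, Pi.zero_apply] at this
      linarith
    have hsupp : ∀ i j, ω₁ i j ≠ 0 → i ∈ A ∩ B ∧ j ∈ A ∩ B ∧ i ≠ j := by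
      intro i j h
      have hadjA : (restrictG G A).Adj i j := by
        by_contra hn
        exact h (z1 i j hn)
      have hadjB : (restrictG G B).Adj i j := by
        by_contra hn
        have := z2 i j hn
        rw [hpt] at this
        exact h (by linarith)
      exact ⟨Finset.mem_inter.mpr ⟨hadjA.2.1, hadjB.2.1⟩,
        Finset.mem_inter.mpr ⟨hadjA.2.2, hadjB.2.2⟩, hadjA.1.ne⟩
    have h1 : ω₁ = 0 := no_stress_of_affine_indep (A ∩ B) p haff ω₁ hsupp e1
    refine ⟨h1, ?_⟩
    funext i j
    rw [Pi.zero_apply, hpt, h1, Pi.zero_apply, Pi.zero_apply, neg_zero]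
end

section
/- Let m, n, d ∈ N with m, n ≥ d+2 and m + n ≤ binom(d+2, 2). If (K_{m,n}, p) is a generic d-dimensional framework on the complete bipartite graph, then every equilibrium stress matrix of (K_{m,n}, p) has all diagonal entries equal to zero; consequently every nonzero equilibrium stress matrix of (K_{m,n}, p) is indefinite (neither PSD nor NSD). -/
open Matrix Finset

noncomputable def sq2 {K R : Type*} [CommMonoid R] (y : K → R) : Sym2 K → R :=
  Sym2.lift ⟨fun a b => y a * y b, fun _ _ => mul_comm _ _⟩
@[simp] lemma sq2_mk {K R : Type*} [CommMonoid R] (y : K → R) (a b : K) :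
    sq2 y s(a, b) = y a * y b := rfl
lemma sum_sq2_support {K R : Type*} [Fintype K] [DecidableEq K] [CommRing R]
    (y : K → R) (c : Sym2 K → R) (F : Finset (Sym2 K))
    (h : ∀ t ∉ F, sq2 y t = 0) :
    ∑ t : Sym2 K, sq2 y t * c t = ∑ t ∈ F, sq2 y t * c t :=
  (Finset.sum_subset F.subset_univ (fun t _ ht => by rw [h t ht, zero_mul])).symm
noncomputable def spt (d : ℕ) : Sym2 (Fin (d + 1)) → Fin (d + 1) → ℚ :=
  Sym2.lift ⟨fun a b α =>
    (if α = a ∧ α ≠ Fin.last d then 1 else 0) + (if α = b ∧ α ≠ Fin.last d then 1 else 0)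
      + (if α = Fin.last d then 1 else 0),
    fun _ _ => by funext α; ring⟩
lemma spt_mk (d : ℕ) (a b α : Fin (d + 1)) :
    spt d s(a, b) α =
    (if α = a ∧ α ≠ Fin.last d then 1 else 0) + (if α = b ∧ α ≠ Fin.last d then 1 else 0)
      + (if α = Fin.last d then 1 else 0) := rfl

lemma specialW (d : ℕ) (c : Sym2 (Fin (d + 1)) → ℚ)
    (H : ∀ s, ∑ t : Sym2 (Fin (d + 1)), sq2 (spt d s) t * c t = 0) : c = 0 := by
  set l := Fin.last d with hl
  have hcs : ∀ a : Fin d, a.castSucc ≠ l := fun a => (Fin.castSucc_lt_last a).ne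
  -- equation at the point 0  (pair {l,l})
  have E0 : c s(l, l) = 0 := by
    have h := H s(l, l)
    rw [sum_sq2_support _ _ {s(l, l)} ?_] at h
    · simpa [spt_mk, hl] using h
    · intro t ht
      induction t using Sym2.ind with
      | _ α β =>
        simp only [Finset.mem_singleton] at ht
        by_cases hα : α = l
        · by_cases hβ : β = l
          · exact absurd (by rw [hα, hβ]) ht
          · simp [sq2_mk, spt_mk, hβ, ← hl]
        · simp [sq2_mk, spt_mk, hα, ← hl]
  -- equations at the points e_a and 2e_a
  have E12 : ∀ a : Fin d, c s(a.castSucc, a.castSucc) = 0 ∧ c s(a.castSucc, l) = 0 := by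
    intro a
    have side : ∀ b : Fin (d+1), b = a.castSucc ∨ b = l →
        ∀ t ∉ ({s(a.castSucc, a.castSucc), s(a.castSucc, l), s(l, l)} :
        Finset (Sym2 (Fin (d+1)))), sq2 (spt d s(a.castSucc, b)) t = 0 := by
      intro b hb t ht
      induction t using Sym2.ind with
      | _ α β =>
        simp only [Finset.mem_insert, Finset.mem_singleton] at ht
        push_neg at ht
        obtain ⟨h1, h2, h3⟩ := ht
        by_cases hα : α = a.castSucc ∨ α = l
        · by_cases hβ : β = a.castSucc ∨ β = l
          · exfalso
            rcases hα with hα | hα <;> rcases hβ with hβ | hβ <;> subst hα <;> subst hβ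
            · exact h1 rfl
            · exact h2 rfl
            · exact h2 (Sym2.eq_swap)
            · exact h3 rfl
          · push_neg at hβ
            have : spt d s(a.castSucc, b) β = 0 := by
              rcases hb with hb | hb <;> subst hb <;>
                simp [spt_mk, hβ.1, hβ.2, hcs a, ← hl]
            simp [sq2_mk, this]
        · push_neg at hα
          have : spt d s(a.castSucc, b) α = 0 := by
            rcases hb with hb | hb <;> subst hb <;>
              simp [spt_mk, hα.1, hα.2, hcs a, ← hl]
          simp [sq2_mk, this]
    have hdist1 : (s(a.castSucc, a.castSucc) : Sym2 (Fin (d+1))) ∉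
        ({s(a.castSucc, l), s(l, l)} : Finset (Sym2 (Fin (d+1)))) := by
      simp [Sym2.eq_iff, hcs a]
    have hdist2 : (s(a.castSucc, l) : Sym2 (Fin (d+1))) ∉
        ({s(l, l)} : Finset (Sym2 (Fin (d+1)))) := by
      simp [Sym2.eq_iff, hcs a]
    have h1 := H s(a.castSucc, l)
    have h2 := H s(a.castSucc, a.castSucc)
    rw [sum_sq2_support _ _ _ (side l (Or.inr rfl)), Finset.sum_insert hdist1,
      Finset.sum_insert hdist2, Finset.sum_singleton] at h1
    rw [sum_sq2_support _ _ _ (side a.castSucc (Or.inl rfl)), Finset.sum_insert hdist1,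
      Finset.sum_insert hdist2, Finset.sum_singleton] at h2
    simp only [sq2_mk, spt_mk, hcs a, hl] at h1 h2
    norm_num [hcs a, E0] at h1 h2
    constructor <;> linarith
  have E1 : ∀ a : Fin d, c s(a.castSucc, a.castSucc) = 0 := fun a => (E12 a).1
  have E2 : ∀ a : Fin d, c s(a.castSucc, l) = 0 := fun a => (E12 a).2
  have E3 : ∀ a b : Fin d, a ≠ b → c s(a.castSucc, b.castSucc) = 0 := by
    intro a b hab
    have hne : a.castSucc ≠ b.castSucc := fun h => hab (Fin.castSucc_injective _ h)
    have hne' := hne.symm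
    have ha := hcs a
    have hb := hcs b
    have side : ∀ t ∉ ({s(a.castSucc, a.castSucc), s(a.castSucc, b.castSucc), s(a.castSucc, l),
        s(b.castSucc, b.castSucc), s(b.castSucc, l), s(l, l)} : Finset (Sym2 (Fin (d+1)))),
        sq2 (spt d s(a.castSucc, b.castSucc)) t = 0 := by
      intro t ht
      induction t using Sym2.ind with
      | _ α β =>
        by_cases hα : α = a.castSucc ∨ α = b.castSucc ∨ α = l
        · by_cases hβ : β = a.castSucc ∨ β = b.castSucc ∨ β = l
          · exfalso
            apply ht
            rcases hα with hα|hα|hα <;> rcases hβ with hβ|hβ|hβ <;> subst hα <;> subst hβ <;>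
              simp [Sym2.eq_iff]
          · push_neg at hβ
            have hz : spt d s(a.castSucc, b.castSucc) β = 0 := by
              simp [spt_mk, hβ.1, hβ.2.1, hβ.2.2, ← hl]
            simp [sq2_mk, hz]
        · push_neg at hα
          have hz : spt d s(a.castSucc, b.castSucc) α = 0 := by
            simp [spt_mk, hα.1, hα.2.1, hα.2.2, ← hl]
          simp [sq2_mk, hz]
    have hd1 : (s(a.castSucc, a.castSucc) : Sym2 (Fin (d+1))) ∉
        ({s(a.castSucc, b.castSucc), s(a.castSucc, l), s(b.castSucc, b.castSucc),
          s(b.castSucc, l), s(l, l)} : Finset (Sym2 (Fin (d+1)))) := by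
      simp [Sym2.eq_iff, hne, hne', ha, hb]
    have hd2 : (s(a.castSucc, b.castSucc) : Sym2 (Fin (d+1))) ∉
        ({s(a.castSucc, l), s(b.castSucc, b.castSucc), s(b.castSucc, l), s(l, l)} :
          Finset (Sym2 (Fin (d+1)))) := by
      simp [Sym2.eq_iff, hne, hne', ha, hb]
    have hd3 : (s(a.castSucc, l) : Sym2 (Fin (d+1))) ∉
        ({s(b.castSucc, b.castSucc), s(b.castSucc, l), s(l, l)} :
          Finset (Sym2 (Fin (d+1)))) := by
      simp [Sym2.eq_iff, hne, hne', ha, hb]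
    have hd4 : (s(b.castSucc, b.castSucc) : Sym2 (Fin (d+1))) ∉
        ({s(b.castSucc, l), s(l, l)} : Finset (Sym2 (Fin (d+1)))) := by
      simp [Sym2.eq_iff, hne, hne', ha, hb]
    have hd5 : (s(b.castSucc, l) : Sym2 (Fin (d+1))) ∉
        ({s(l, l)} : Finset (Sym2 (Fin (d+1)))) := by
      simp [Sym2.eq_iff, hne, hne', ha, hb]
    have h := H s(a.castSucc, b.castSucc)
    rw [sum_sq2_support _ _ _ side, Finset.sum_insert hd1, Finset.sum_insert hd2,
      Finset.sum_insert hd3, Finset.sum_insert hd4, Finset.sum_insert hd5,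
      Finset.sum_singleton] at h
    simp only [sq2_mk, spt_mk, hl] at h
    norm_num [ha, hb, hne, hne', E0, E1, E2, ← hl] at h
    exact h
  funext t
  simp only [Pi.zero_apply]
  induction t using Sym2.ind with
  | _ α β =>
    induction α using Fin.lastCases with
    | last =>
      induction β using Fin.lastCases with
      | last => exact E0
      | cast b => rw [Sym2.eq_swap]; exact E2 b
    | cast a =>
      induction β using Fin.lastCases with
      | last => exact E2 a
      | cast b =>
        by_cases hab : a = b
        · subst hab; exact E1 a
        · exact E3 a b hab

lemma sq2_comp {K R S : Type*} [CommMonoid R] [CommMonoid S] (φ : R → S)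
    (hφ : ∀ x y, φ (x * y) = φ x * φ y) (y : K → R)
    (t : Sym2 K) : φ (sq2 y t) = sq2 (fun k => φ (y k)) t := by
  induction t using Sym2.ind with
  | _ a b => simp [sq2_mk, hφ]

lemma spt_last (d : ℕ) (s : Sym2 (Fin (d + 1))) : spt d s (Fin.last d) = 1 := by
  induction s using Sym2.ind with
  | _ a b =>
    show (if (Fin.last d = a ∧ Fin.last d ≠ Fin.last d) then (1:ℚ) else 0)
      + (if (Fin.last d = b ∧ Fin.last d ≠ Fin.last d) then (1:ℚ) else 0)
      + (if Fin.last d = Fin.last d then (1:ℚ) else 0) = 1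
    simp

lemma generic_indep {ι : Type*} [Fintype ι] [DecidableEq ι] (d : ℕ)
    (hcard : Fintype.card ι ≤ Nat.choose (d + 2) 2)
    (p : ι → Fin d → ℝ)
    (hgen : AlgebraicIndependent ℚ (fun x : ι × Fin d => p x.1 x.2))
    (c : ι → ℝ)
    (hc : ∀ t : Sym2 (Fin (d + 1)), ∑ v, sq2 (Fin.snoc (p v) 1) t * c v = 0) :
    c = 0 := by
  classical
  have hcT : Fintype.card ι ≤ Fintype.card (Sym2 (Fin (d + 1))) := by
    rw [Sym2.card, Fintype.card_fin]
    exact hcard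
  obtain ⟨σ⟩ : Nonempty (ι ↪ Sym2 (Fin (d + 1))) :=
    Function.Embedding.nonempty_iff_card_le.mpr hcT
  -- the polynomial row vectors
  set rowp : Sym2 (Fin (d + 1)) → Fin (d + 1) → MvPolynomial (ι × Fin d) ℚ := fun s =>
    if h : ∃ v, σ v = s then
      Fin.snoc (fun k => MvPolynomial.X (h.choose, k)) 1
    else fun α => algebraMap ℚ (MvPolynomial (ι × Fin d) ℚ) (spt d s α) with hrowp
  set Bp : Matrix (Sym2 (Fin (d + 1))) (Sym2 (Fin (d + 1))) (MvPolynomial (ι × Fin d) ℚ) := Matrix.of fun s t => sq2 (rowp s) t with hBp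
  set W : Matrix (Sym2 (Fin (d + 1))) (Sym2 (Fin (d + 1))) ℚ := Matrix.of fun s t => sq2 (spt d s) t with hW
  -- W has nonzero determinant
  have hWdet : W.det ≠ 0 := by
    intro h0
    obtain ⟨c₀, hc₀ne, hc₀⟩ := (Matrix.exists_mulVec_eq_zero_iff).mpr h0
    apply hc₀ne
    apply specialW d c₀
    intro s
    have := congrFun hc₀ s
    simpa [Matrix.mulVec, dotProduct, hW] using this
  -- evaluation at the special points
  set ev0 : MvPolynomial (ι × Fin d) ℚ →ₐ[ℚ] ℚ :=
    MvPolynomial.aeval (fun x : ι × Fin d => spt d (σ x.1) x.2.castSucc) with hev0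
  have hmap0 : Bp.map ev0 = W := by
    ext s t
    show ev0 (sq2 (rowp s) t) = sq2 (spt d s) t
    rw [sq2_comp ev0 (map_mul ev0)]
    congr 1
    funext α
    by_cases h : ∃ v, σ v = s
    · simp only [hrowp, dif_pos h]
      induction α using Fin.lastCases with
      | last => rw [Fin.snoc_last, _root_.map_one, spt_last]
      | cast k =>
        rw [Fin.snoc_castSucc]
        simp only [hev0, MvPolynomial.aeval_X]
        rw [h.choose_spec]
    · simp only [hrowp, dif_neg h]
      simp
  have hBpdet : Bp.det ≠ 0 := by
    intro h0
    apply hWdet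
    rw [← hmap0, ← AlgHom.mapMatrix_apply, ← AlgHom.map_det, h0, map_zero]
  -- evaluation at the generic points
  set evp : MvPolynomial (ι × Fin d) ℚ →ₐ[ℚ] ℝ := MvPolynomial.aeval (fun x : ι × Fin d => p x.1 x.2) with hevp
  set B : Matrix (Sym2 (Fin (d + 1))) (Sym2 (Fin (d + 1))) ℝ := Bp.map evp with hB
  have hBdet : B.det ≠ 0 := by
    rw [hB, ← AlgHom.mapMatrix_apply, ← AlgHom.map_det]
    intro h0
    exact hBpdet (hgen (by rw [h0, map_zero]))
  have hBσ : ∀ (v : ι) (t : Sym2 (Fin (d+1))), B (σ v) t = sq2 (Fin.snoc (p v) 1) t := by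
    intro v t
    show evp (sq2 (rowp (σ v)) t) = _
    rw [sq2_comp evp (map_mul evp)]
    congr 1
    funext α
    have hex : ∃ w, σ w = σ v := ⟨v, rfl⟩
    have hch : hex.choose = v := σ.injective hex.choose_spec
    simp only [hrowp, dif_pos hex, hch]
    induction α using Fin.lastCases with
    | last => rw [Fin.snoc_last, Fin.snoc_last, _root_.map_one]
    | cast k =>
      rw [Fin.snoc_castSucc, Fin.snoc_castSucc]
      simp only [hevp, MvPolynomial.aeval_X]
  -- extend c by zero and conclude
  set c' : Sym2 (Fin (d + 1)) → ℝ := fun s => if h : ∃ v, σ v = s then c h.choose else 0 with hc'def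
  have hmv : Bᵀ *ᵥ c' = 0 := by
    funext t
    show ∑ s, Bᵀ t s * c' s = 0
    have hzero : ∀ s ∈ Finset.univ, s ∉ Finset.univ.map σ → Bᵀ t s * c' s = 0 := by
      intro s _ hs
      have : ¬ ∃ v, σ v = s := by
        intro ⟨v, hv⟩; exact hs (Finset.mem_map.mpr ⟨v, Finset.mem_univ v, hv⟩)
      simp [hc'def, this]
    rw [← Finset.sum_subset (Finset.subset_univ _) hzero, Finset.sum_map]
    have : ∀ v, Bᵀ t (σ v) * c' (σ v) = sq2 (Fin.snoc (p v) 1) t * c v := by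
      intro v
      have hex : ∃ w, σ w = σ v := ⟨v, rfl⟩
      have hch : hex.choose = v := σ.injective hex.choose_spec
      rw [Matrix.transpose_apply, hBσ]
      simp [hc'def, dif_pos hex, hch]
    rw [Finset.sum_congr rfl fun v _ => this v]
    exact hc t
  have hc'0 : c' = 0 := by
    by_contra hne
    have : Bᵀ.det = 0 := Matrix.exists_mulVec_eq_zero_iff.mp ⟨c', hne, hmv⟩
    rw [Matrix.det_transpose] at this
    exact hBdet this
  funext v
  have hex : ∃ w, σ w = σ v := ⟨v, rfl⟩
  have hch : hex.choose = v := σ.injective hex.choose_spec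
  have := congrFun hc'0 (σ v)
  simpa [hc'def, dif_pos hex, hch] using this

/-- A real positive semidefinite matrix with zero diagonal is zero. -/
lemma psd_zero_diag {N : Type*} [Fintype N] [DecidableEq N] (A : Matrix N N ℝ)
    (hA : A.PosSemidef) (hd : ∀ i, A i i = 0) : A = 0 := by
  have hsym : ∀ i j, A j i = A i j := fun i j => by
    have := congrFun (congrFun hA.1 i) j
    simpa [Matrix.conjTranspose_apply] using this
  ext i j
  by_cases hij : i = j
  · subst hij; simpa using hd i
  · have key : ∀ t : ℝ, 0 ≤ t * (2 * A i j) := by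
      intro t
      set x : N → ℝ := fun k => (if k = i then 1 else 0) + t * (if k = j then 1 else 0) with hx
      have h := hA.dotProduct_mulVec_nonneg x
      have hdot : ∀ y : N → ℝ, x ⬝ᵥ y = y i + t * y j := by
        intro y
        simp only [hx, dotProduct, add_mul, ite_mul, one_mul, zero_mul, mul_assoc,
          Finset.sum_add_distrib, Finset.sum_ite_eq', Finset.mem_univ, if_true,
          ← Finset.mul_sum]
      have hmv : ∀ k, (A *ᵥ x) k = A k i + t * A k j := by
        intro k
        simp only [Matrix.mulVec, dotProduct, hx, mul_add, mul_ite, mul_one, mul_zero,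
          Finset.sum_add_distrib, Finset.sum_ite_eq', Finset.mem_univ, if_true]
        ring
      have hexp : x ⬝ᵥ (A *ᵥ x) = t * (2 * A i j) := by
        rw [hdot, hmv, hmv, hd i, hd j, hsym i j]; ring
      have h' : (0:ℝ) ≤ x ⬝ᵥ A *ᵥ x := by simpa using h
      rw [hexp] at h'
      exact h'
    have h1 := key 1
    have h2 := key (-1)
    have : A i j = 0 := by nlinarith
    simpa using this

/-- For `m, n ≥ d+2` with `m + n ≤ C(d+2, 2)`, every equilibrium stress
matrix of a generic `d`-dimensional framework on the complete bipartite graph `K_{m,n}`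
has zero diagonal; consequently every nonzero such stress matrix is indefinite. -/
theorem stmt12 (m n d : ℕ) (hm : d + 2 ≤ m) (hn : d + 2 ≤ n)
    (hsum : m + n ≤ Nat.choose (d + 2) 2)
    (p : Fin m ⊕ Fin n → Fin d → ℝ)
    (hgen : AlgebraicIndependent ℚ (fun x : (Fin m ⊕ Fin n) × Fin d => p x.1 x.2))
    (Ω : Matrix (Fin m ⊕ Fin n) (Fin m ⊕ Fin n) ℝ)
    (hherm : Ω.IsHermitian)
    (hsupp : ∀ i j, i ≠ j → ¬ (completeBipartiteGraph (Fin m) (Fin n)).Adj i j → Ω i j = 0)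
    (hrow : ∀ i, ∑ j, Ω i j = 0)
    (hequil : ∀ i, ∑ j, Ω i j • p j = 0) :
    (∀ i, Ω i i = 0) ∧ (Ω ≠ 0 → ¬ Ω.PosSemidef ∧ ¬ (-Ω).PosSemidef) := by
  classical
  set q : (Fin m ⊕ Fin n) → Fin (d + 1) → ℝ := fun v => Fin.snoc (p v) 1 with hq
  have hΩsym : ∀ i j, Ω j i = Ω i j := fun i j => by
    have := congrFun (congrFun hherm i) j
    simpa [Matrix.conjTranspose_apply] using this
  have hAA : ∀ a a' : Fin m, a ≠ a' → Ω (Sum.inl a) (Sum.inl a') = 0 := by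
    intro a a' h
    exact hsupp _ _ (by simp [h]) (by simp)
  have hBB : ∀ b b' : Fin n, b ≠ b' → Ω (Sum.inr b) (Sum.inr b') = 0 := by
    intro b b' h
    exact hsupp _ _ (by simp [h]) (by simp)
  have hEq : ∀ i (α : Fin (d + 1)), ∑ j, Ω i j * q j α = 0 := by
    intro i α
    induction α using Fin.lastCases with
    | last => simpa [hq] using hrow i
    | cast k =>
      have := congrFun (hequil i) k
      simpa [hq, Finset.sum_apply, Pi.smul_apply, smul_eq_mul] using this
  have key1 : ∀ (a : Fin m) (α : Fin (d + 1)),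
      Ω (Sum.inl a) (Sum.inl a) * q (Sum.inl a) α
        = -∑ b, Ω (Sum.inl a) (Sum.inr b) * q (Sum.inr b) α := by
    intro a α
    have h := hEq (Sum.inl a) α
    rw [Fintype.sum_sum_type] at h
    have hsing : ∑ a', Ω (Sum.inl a) (Sum.inl a') * q (Sum.inl a') α
        = Ω (Sum.inl a) (Sum.inl a) * q (Sum.inl a) α := by
      apply Finset.sum_eq_single a
      · intro a' _ h'
        rw [hAA a a' (Ne.symm h'), zero_mul]
      · intro h'
        exact absurd (Finset.mem_univ a) h'
    rw [hsing] at h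
    linarith [h]
  have key2 : ∀ (b : Fin n) (α : Fin (d + 1)),
      Ω (Sum.inr b) (Sum.inr b) * q (Sum.inr b) α
        = -∑ a, Ω (Sum.inr b) (Sum.inl a) * q (Sum.inl a) α := by
    intro b α
    have h := hEq (Sum.inr b) α
    rw [Fintype.sum_sum_type] at h
    have hsing : ∑ b', Ω (Sum.inr b) (Sum.inr b') * q (Sum.inr b') α
        = Ω (Sum.inr b) (Sum.inr b) * q (Sum.inr b) α := by
      apply Finset.sum_eq_single b
      · intro b' _ h'
        rw [hBB b b' (Ne.symm h'), zero_mul]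
      · intro h'
        exact absurd (Finset.mem_univ b) h'
    rw [hsing] at h
    linarith [h]
  set cc : Fin m ⊕ Fin n → ℝ :=
    Sum.elim (fun a => Ω (Sum.inl a) (Sum.inl a)) (fun b => -Ω (Sum.inr b) (Sum.inr b)) with hcc
  -- the two "partial" quadratic sums
  set LA : Fin (d + 1) → Fin (d + 1) → ℝ :=
    fun α β => ∑ a, q (Sum.inl a) α * q (Sum.inl a) β * Ω (Sum.inl a) (Sum.inl a) with hLA
  set LB : Fin (d + 1) → Fin (d + 1) → ℝ :=
    fun α β => ∑ b, q (Sum.inr b) α * q (Sum.inr b) β * Ω (Sum.inr b) (Sum.inr b) with hLB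
  set D : Fin (d + 1) → Fin (d + 1) → ℝ :=
    fun α β => ∑ a, ∑ b, Ω (Sum.inl a) (Sum.inr b) * (q (Sum.inr b) α * q (Sum.inl a) β) with hD
  have hA : ∀ α β, LA α β = -D α β := by
    intro α β
    have step : ∀ a : Fin m, q (Sum.inl a) α * q (Sum.inl a) β * Ω (Sum.inl a) (Sum.inl a)
        = -∑ b, Ω (Sum.inl a) (Sum.inr b) * (q (Sum.inr b) α * q (Sum.inl a) β) := by
      intro a
      have h1 : q (Sum.inl a) α * q (Sum.inl a) β * Ω (Sum.inl a) (Sum.inl a)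
          = (Ω (Sum.inl a) (Sum.inl a) * q (Sum.inl a) α) * q (Sum.inl a) β := by ring
      rw [h1, key1 a α, neg_mul, Finset.sum_mul]
      exact congrArg Neg.neg (Finset.sum_congr rfl fun b _ => mul_assoc _ _ _)
    simp only [hLA, hD]
    rw [Finset.sum_congr rfl fun a _ => step a]
    exact Finset.sum_neg_distrib _
  have hB : ∀ α β, LB α β = -D β α := by
    intro α β
    have step : ∀ b : Fin n, q (Sum.inr b) α * q (Sum.inr b) β * Ω (Sum.inr b) (Sum.inr b)
        = -∑ a, Ω (Sum.inl a) (Sum.inr b) * (q (Sum.inr b) β * q (Sum.inl a) α) := by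
      intro b
      have h1 : q (Sum.inr b) α * q (Sum.inr b) β * Ω (Sum.inr b) (Sum.inr b)
          = (Ω (Sum.inr b) (Sum.inr b) * q (Sum.inr b) α) * q (Sum.inr b) β := by ring
      rw [h1, key2 b α, neg_mul, Finset.sum_mul]
      refine congrArg Neg.neg (Finset.sum_congr rfl fun a _ => ?_)
      rw [hΩsym (Sum.inr b) (Sum.inl a)]
      ring
    simp only [hLB, hD]
    rw [Finset.sum_comm]
    rw [Finset.sum_congr rfl fun b _ => step b]
    exact Finset.sum_neg_distrib _
  have hLAsym : ∀ α β, LA α β = LA β α := by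
    intro α β
    rw [hLA]
    apply Finset.sum_congr rfl
    intro a _
    ring
  have hDsym : ∀ α β, D α β = D β α := by
    intro α β
    have h1 := hA α β
    have h2 := hA β α
    have h3 := hLAsym α β
    linarith
  have hrel : ∀ t : Sym2 (Fin (d + 1)), ∑ v, sq2 (Fin.snoc (p v) 1) t * cc v = 0 := by
    intro t
    induction t using Sym2.ind with
    | _ α β =>
      have hsq : ∀ v, sq2 (Fin.snoc (p v) 1) s(α, β) = q v α * q v β := fun v => rfl
      rw [Fintype.sum_sum_type]
      simp only [hsq, hcc, Sum.elim_inl, Sum.elim_inr]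
      have e1 : ∑ a, q (Sum.inl a) α * q (Sum.inl a) β * Ω (Sum.inl a) (Sum.inl a) = LA α β := rfl
      have e2 : ∑ b, q (Sum.inr b) α * q (Sum.inr b) β * (-Ω (Sum.inr b) (Sum.inr b))
          = -LB α β := by
        simp only [hLB]
        rw [← Finset.sum_neg_distrib]
        exact Finset.sum_congr rfl fun b _ => by ring
      rw [e1, e2, hA, hB, hDsym]
      ring
  have hcc0 : cc = 0 := by
    apply generic_indep d ?_ p hgen cc hrel
    simpa using hsum
  have hdiag : ∀ i, Ω i i = 0 := by
    intro i
    cases i with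
    | inl a => simpa [hcc] using congrFun hcc0 (Sum.inl a)
    | inr b =>
      have := congrFun hcc0 (Sum.inr b)
      simp only [hcc, Sum.elim_inr, Pi.zero_apply, neg_eq_zero] at this
      exact this
  refine ⟨hdiag, fun hne => ⟨fun hP => hne (psd_zero_diag Ω hP hdiag), fun hP => ?_⟩⟩
  apply hne
  have h0 : (-Ω) = 0 := psd_zero_diag (-Ω) hP (fun i => by simp [hdiag i])
  exact neg_eq_zero.mp h0
end

section
/- Let G be a graph that is a d-circuit, i.e., G is not d-independent but every proper subgraph of G is d-independent. Then G is (d+1)-independent. (Proof via coning: G is d-independent iff the cone v_0 * G is (d+1)-independent; since G − v is d-independent for every vertex v, v_0 * (G − v) is (d+1)-independent, and G embeds as a subgraph of v_0 * (G − v).) -/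
set_option maxRecDepth 8000
set_option maxHeartbeats 2000000
set_option synthInstance.maxHeartbeats 1000000

/-- A configuration is generic if its coordinates are algebraically independent over `ℚ`. -/
def GenericConfig {n d : ℕ} (p : Fin n → Fin d → ℝ) : Prop :=
  AlgebraicIndependent ℚ (fun x : Fin n × Fin d => p x.1 x.2)

/-- `G` is `d`-independent: no generic `d`-dimensional framework on `G` supports a nonzero
equilibrium stress. -/
def Indep (n d : ℕ) (G : SimpleGraph (Fin n)) : Prop :=
  ∀ p : Fin n → Fin d → ℝ, GenericConfig p →
    ∀ ω : Fin n → Fin n → ℝ, IsStressOf d G p ω → ω = 0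

/-! ### Auxiliary lemmas -/

/-- Dropping the last coordinate of a generic configuration yields a generic configuration. -/
lemma generic_proj {n d : ℕ} {p : Fin n → Fin (d+1) → ℝ} (hp : GenericConfig p) :
    GenericConfig (fun i (k : Fin d) => p i k.castSucc) := by
  have := hp.comp (fun x : Fin n × Fin d => ((x.1, x.2.castSucc) : Fin n × Fin (d+1)))
    (fun x y hxy => by
      obtain ⟨h1, h2⟩ := Prod.mk.injEq .. ▸ hxy
      exact Prod.ext h1 (Fin.castSucc_injective _ h2))
  exact this

/-- The coordinatewise form of the equilibrium condition. -/
lemma stress_coord {n d : ℕ} {G : SimpleGraph (Fin n)} {p : Fin n → Fin d → ℝ}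
    {ω : Fin n → Fin n → ℝ} (hω : IsStressOf d G p ω) (i : Fin n) (k : Fin d) :
    ∑ j, ω i j * (p j k - p i k) = 0 := by
  have := congrFun (hω.2.2 i) k
  simpa [Finset.sum_apply] using this

/-- A stress of a `(d+1)`-dimensional framework is a stress of its projection. -/
lemma stress_proj {n d : ℕ} {G : SimpleGraph (Fin n)} {p : Fin n → Fin (d+1) → ℝ}
    {ω : Fin n → Fin n → ℝ} (hω : IsStressOf (d+1) G p ω) :
    IsStressOf d G (fun i (k : Fin d) => p i k.castSucc) ω := by
  refine ⟨hω.1, hω.2.1, fun i => ?_⟩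
  funext k
  simpa [Finset.sum_apply] using stress_coord hω i k.castSucc

open Classical in
/-- The matrix of the linear system cutting out stresses of `(G, q)`, with entries in `K`. -/
noncomputable def strMat {n d : ℕ} (G : SimpleGraph (Fin n)) (K : IntermediateField ℚ ℝ)
    (Q : Fin n → Fin d → K) :
    Matrix (((Fin n × Fin n) ⊕ (Fin n × Fin n)) ⊕ (Fin n × Fin d)) (Fin n × Fin n) K :=
  fun r c =>
    match r with
    | .inl (.inl (i, j)) => (if c = (i, j) then 1 else 0) - (if c = (j, i) then 1 else 0)
    | .inl (.inr (i, j)) => if G.Adj i j then 0 else (if c = (i, j) then 1 else 0)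
    | .inr (i, k) => if c.1 = i then (Q c.2 k - Q i k) else 0

lemma strMat_spec {n d : ℕ} (G : SimpleGraph (Fin n)) (K : IntermediateField ℚ ℝ)
    (q : Fin n → Fin d → ℝ) (hqK : ∀ i k, q i k ∈ K)
    (x : Fin n × Fin n → ℝ) :
    ((strMat G K (fun i k => ⟨q i k, hqK i k⟩)).map (algebraMap K ℝ)).mulVec x = 0 ↔
      IsStressOf d G q (fun i j => x (i, j)) := by
  classical
  let φ := algebraMap K ℝ
  let B := (strMat G K (fun i k => ⟨q i k, hqK i k⟩)).map (algebraMap K ℝ)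
  show B.mulVec x = 0 ↔ _
  have hB1 : ∀ i j, B.mulVec x (.inl (.inl (i, j))) = x (i, j) - x (j, i) := by
    intro i j
    show ∑ c, φ ((if c = (i, j) then 1 else 0) - (if c = (j, i) then 1 else 0)) * x c = _
    simp only [map_sub, apply_ite φ, map_one, map_zero, sub_mul, ite_mul, one_mul, zero_mul]
    rw [Finset.sum_sub_distrib]
    simp [Finset.sum_ite_eq']
  have hB2 : ∀ i j, ¬ G.Adj i j → B.mulVec x (.inl (.inr (i, j))) = x (i, j) := by
    intro i j h
    show ∑ c, φ (if G.Adj i j then 0 else (if c = (i, j) then 1 else 0)) * x c = _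
    simp only [if_neg h, apply_ite φ, map_one, map_zero, ite_mul, one_mul, zero_mul]
    simp [Finset.sum_ite_eq']
  have hB2' : ∀ i j, G.Adj i j → B.mulVec x (.inl (.inr (i, j))) = 0 := by
    intro i j h
    show ∑ c, φ (if G.Adj i j then 0 else (if c = (i, j) then 1 else 0)) * x c = _
    simp [if_pos h]
  have hB3 : ∀ i k, B.mulVec x (.inr (i, k)) = ∑ j, x (i, j) * (q j k - q i k) := by
    intro i k
    show ∑ c : Fin n × Fin n,
        φ (if c.1 = i then ((⟨q c.2 k, hqK c.2 k⟩ : K) - ⟨q i k, hqK i k⟩) else 0) * x c = _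
    rw [Fintype.sum_prod_type]
    simp only [apply_ite φ, map_zero, ite_mul, zero_mul]
    have hpull : ∀ x1 : Fin n,
        (∑ x2 : Fin n, if x1 = i then φ ((⟨q x2 k, hqK x2 k⟩ : K) - ⟨q i k, hqK i k⟩) * x (x1, x2) else 0)
          = if x1 = i then ∑ x2 : Fin n, φ ((⟨q x2 k, hqK x2 k⟩ : K) - ⟨q i k, hqK i k⟩) * x (x1, x2) else 0 := by
      intro x1; split <;> simp
    rw [Finset.sum_congr rfl fun x1 _ => hpull x1, Finset.sum_ite_eq' Finset.univ i]
    simp only [Finset.mem_univ, if_true]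
    refine Finset.sum_congr rfl fun j _ => ?_
    have : φ ((⟨q j k, hqK j k⟩ : K) - ⟨q i k, hqK i k⟩) = q j k - q i k := by
      rw [map_sub]; rfl
    rw [this, mul_comm]
  constructor
  · intro h0
    refine ⟨fun i j => ?_, fun i j h => ?_, fun i => ?_⟩
    · have := congrFun h0 (.inl (.inl (i, j)))
      rw [hB1] at this
      simpa [sub_eq_zero] using this
    · have := congrFun h0 (.inl (.inr (i, j)))
      rw [hB2 i j h] at this
      simpa using this
    · funext k
      have := congrFun h0 (.inr (i, k))
      rw [hB3] at this
      simpa [Finset.sum_apply] using this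
  · intro hs
    funext r
    rcases r with (⟨i, j⟩ | ⟨i, j⟩) | ⟨i, k⟩
    · rw [hB1]
      simp [hs.1 i j]
    · by_cases h : G.Adj i j
      · rw [hB2' i j h]; rfl
      · rw [hB2 i j h]
        simpa using hs.2.1 i j h
    · rw [hB3]
      have := congrFun (hs.2.2 i) k
      simpa [Finset.sum_apply] using this

/-- If a generic framework supports a nonzero stress, it supports one whose coefficients
lie in any subfield of `ℝ` containing the coordinates of the configuration. -/
lemma descent {n d : ℕ} (G : SimpleGraph (Fin n)) (q : Fin n → Fin d → ℝ)
    (K : IntermediateField ℚ ℝ) (hqK : ∀ i k, q i k ∈ K)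
    (ω : Fin n → Fin n → ℝ) (hω : IsStressOf d G q ω) (hne : ω ≠ 0) :
    ∃ ω₀ : Fin n → Fin n → ℝ, IsStressOf d G q ω₀ ∧ ω₀ ≠ 0 ∧ ∀ i j, ω₀ i j ∈ K := by
  classical
  set A := strMat G K (fun i k => ⟨q i k, hqK i k⟩) with hA
  let φ := algebraMap K ℝ
  by_cases hker : ∃ y : Fin n × Fin n → K, A.mulVec y = 0 ∧ y ≠ 0
  · obtain ⟨y, hy0, hyne⟩ := hker
    refine ⟨fun i j => φ (y (i, j)), ?_, ?_, fun i j => (y (i, j)).2⟩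
    · have hmap : (A.map φ).mulVec (fun c => φ (y c)) = 0 := by
        funext r
        have h1 : φ (A.mulVec y r) = 0 := by rw [hy0]; simp
        have h2 : (A.map φ).mulVec (fun c => φ (y c)) r = φ (A.mulVec y r) := by
          simp [Matrix.mulVec, dotProduct, Matrix.map_apply, map_sum]
        simp [h2, h1]
      exact (strMat_spec G K q hqK (fun c => φ (y c))).1 hmap
    · intro h
      apply hyne
      funext c
      have h1 : φ (y (c.1, c.2)) = 0 := congrFun (congrFun h c.1) c.2
      have h2 : y (c.1, c.2) = 0 := (algebraMap K ℝ).injective (by simpa using h1)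
      simpa using h2
  · exfalso
    push_neg at hker
    have hinj : LinearMap.ker (Matrix.toLin' A) = ⊥ := by
      rw [LinearMap.ker_eq_bot']
      intro y hy
      by_contra hyne
      exact hyne (hker y (by rwa [Matrix.toLin'_apply] at hy))
    obtain ⟨g, hg⟩ := (Matrix.toLin' A).exists_leftInverse_of_injective hinj
    have hBA : LinearMap.toMatrix' g * A = 1 := by
      rw [← LinearMap.toMatrix'_toLin' A, ← LinearMap.toMatrix'_comp, hg,
        LinearMap.toMatrix'_id]
    set x : Fin n × Fin n → ℝ := fun c => ω c.1 c.2 with hx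
    have hx0 : (A.map φ).mulVec x = 0 := by
      refine (strMat_spec G K q hqK x).2 ?_
      simpa [hx] using hω
    have : x = 0 := by
      calc x = (1 : Matrix (Fin n × Fin n) (Fin n × Fin n) ℝ).mulVec x :=
              (Matrix.one_mulVec x).symm
        _ = (((LinearMap.toMatrix' g) * A).map φ).mulVec x := by rw [hBA]; simp
        _ = (((LinearMap.toMatrix' g).map φ) * (A.map φ)).mulVec x := by
              rw [Matrix.map_mul]
        _ = ((LinearMap.toMatrix' g).map φ).mulVec ((A.map φ).mulVec x) :=
              (Matrix.mulVec_mulVec _ _ _).symm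
        _ = 0 := by rw [hx0]; simp
    apply hne
    funext i j
    have := congrFun this (i, j)
    simpa [hx] using this

/-- In a circuit, any stress of a generic framework is a multiple of a given full-support
stress. -/
lemma scaling {n d : ℕ} {G : SimpleGraph (Fin n)} {q : Fin n → Fin d → ℝ}
    (hq : GenericConfig q)
    (hproper : ∀ H : SimpleGraph (Fin n), H < G → Indep n d H)
    {ω ω' : Fin n → Fin n → ℝ} (hω : IsStressOf d G q ω) (hω' : IsStressOf d G q ω')
    {a b : Fin n} (hab : G.Adj a b) (hfull : ∀ i j, G.Adj i j → ω i j ≠ 0) :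
    ∀ i j, ω' i j = (ω' a b / ω a b) * ω i j := by
  classical
  set c := ω' a b / ω a b with hc
  set δ : Fin n → Fin n → ℝ := fun i j => ω' i j - c * ω i j with hδ
  set H := G.deleteEdges {s(a, b)} with hH
  have hHlt : H < G := by
    refine lt_of_le_of_ne (SimpleGraph.deleteEdges_le _) fun hEq => ?_
    have : H.Adj a b := by rw [hEq]; exact hab
    rw [hH, SimpleGraph.deleteEdges_adj] at this
    exact this.2 (by simp)
  have hδab : δ a b = 0 := by
    have := hfull a b hab
    show ω' a b - c * ω a b = 0
    rw [hc, div_mul_cancel₀ _ this, sub_self]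
  have hδs : IsStressOf d H q δ := by
    refine ⟨fun i j => by simp [hδ, hω.1 i j, hω'.1 i j], fun i j hna => ?_, fun i => ?_⟩
    · rw [hH, SimpleGraph.deleteEdges_adj] at hna
      push_neg at hna
      by_cases hGa : G.Adj i j
      · have := hna hGa
        simp only [Set.mem_singleton_iff, Sym2.eq_iff] at this
        rcases this with ⟨rfl, rfl⟩ | ⟨rfl, rfl⟩
        · exact hδab
        · rw [hδ]
          simp only
          rw [hω.1, hω'.1]
          exact hδab
      · simp [hδ, hω.2.1 i j hGa, hω'.2.1 i j hGa]
    · have h1 := hω.2.2 i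
      have h2 := hω'.2.2 i
      calc ∑ j, δ i j • (q j - q i)
          = ∑ j, (ω' i j • (q j - q i) - c • (ω i j • (q j - q i))) := by
            refine Finset.sum_congr rfl fun j _ => ?_
            simp [hδ, sub_smul, mul_smul]
        _ = (∑ j, ω' i j • (q j - q i)) - c • ∑ j, ω i j • (q j - q i) := by
            rw [Finset.sum_sub_distrib, Finset.smul_sum]
        _ = 0 := by rw [h1, h2]; simp
  have hδ0 := hproper H hHlt q hq δ hδs
  intro i j
  have := congrFun (congrFun hδ0 i) j
  simp only [hδ, Pi.zero_apply] at this
  linarith [this]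

/-- The coordinate `p b (last d)` of a generic configuration does not lie in the subfield
generated by the remaining coordinates. -/
lemma transcend_contra {n d : ℕ} (p : Fin n → Fin (d+1) → ℝ) (hp : GenericConfig p) (b : Fin n)
    (hmem : p b (Fin.last d) ∈ IntermediateField.adjoin ℚ
      (Set.range fun v : {v : Fin n × Fin (d+1) // v ≠ (b, Fin.last d)} => p v.1.1 v.1.2)) :
    False := by
  classical
  have hp' : AlgebraicIndependent ℚ (fun x : Fin n × Fin (d+1) => p x.1 x.2) := hp
  set x' : {v : Fin n × Fin (d+1) // v ≠ (b, Fin.last d)} → ℝ := fun v => p v.1.1 v.1.2 with hx'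
  have hx'ind : AlgebraicIndependent ℚ x' := by
    have h := hp'.comp (fun v : {v : Fin n × Fin (d+1) // v ≠ (b, Fin.last d)} => v.1)
      Subtype.val_injective
    exact h
  have hopt : AlgebraicIndependent ℚ (fun o : Option {v : Fin n × Fin (d+1) // v ≠ (b, Fin.last d)} =>
      o.elim (p b (Fin.last d)) x') := by
    have hinj : Function.Injective
        (fun o : Option {v : Fin n × Fin (d+1) // v ≠ (b, Fin.last d)} =>
          o.elim (b, Fin.last d) Subtype.val) := by
      intro o1 o2 hoo
      cases o1 with
      | none => cases o2 with
        | none => rfl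
        | some v => exact absurd hoo.symm v.2
      | some v => cases o2 with
        | none => exact absurd hoo v.2
        | some w => exact congrArg _ (Subtype.ext hoo)
    have := hp'.comp
      (fun o : Option {v : Fin n × Fin (d+1) // v ≠ (b, Fin.last d)} =>
        o.elim (b, Fin.last d) Subtype.val) hinj
    have hfun : ((fun x : Fin n × Fin (d+1) => p x.1 x.2) ∘
        (fun o : Option {v : Fin n × Fin (d+1) // v ≠ (b, Fin.last d)} =>
          o.elim (b, Fin.last d) Subtype.val)) =
        fun o => o.elim (p b (Fin.last d)) x' := by
      funext o; cases o <;> rfl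
    rwa [hfun] at this
  have htr : Transcendental (Algebra.adjoin ℚ (Set.range x')) (p b (Fin.last d)) :=
    (hx'ind.option_iff_transcendental (p b (Fin.last d))).1 hopt
  rw [IntermediateField.mem_adjoin_range_iff] at hmem
  obtain ⟨r, s, hrs⟩ := hmem
  by_cases hs0 : (MvPolynomial.aeval x') s = 0
  · exact htr (by rw [hrs, hs0, div_zero]; exact isAlgebraic_zero)
  · have hsmem : (MvPolynomial.aeval x') s ∈ Algebra.adjoin ℚ (Set.range x') := by
      rw [Algebra.adjoin_range_eq_range_aeval]; exact ⟨s, rfl⟩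
    have hrmem : (MvPolynomial.aeval x') r ∈ Algebra.adjoin ℚ (Set.range x') := by
      rw [Algebra.adjoin_range_eq_range_aeval]; exact ⟨r, rfl⟩
    refine htr ⟨Polynomial.C (⟨_, hsmem⟩ : Algebra.adjoin ℚ (Set.range x')) * Polynomial.X
      - Polynomial.C ⟨_, hrmem⟩, ?_, ?_⟩
    · intro h0
      have := congrArg (fun P => Polynomial.coeff P 1) h0
      simp [Polynomial.coeff_sub, Polynomial.coeff_C] at this
      exact hs0 (by simpa [Subtype.ext_iff] using this)
    · have : (Polynomial.aeval (p b (Fin.last d)))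
          (Polynomial.C (⟨_, hsmem⟩ : Algebra.adjoin ℚ (Set.range x')) * Polynomial.X
            - Polynomial.C ⟨_, hrmem⟩) =
          (MvPolynomial.aeval x') s * p b (Fin.last d) - (MvPolynomial.aeval x') r := by
        simp [Polynomial.aeval_C]
      rw [this, hrs]
      field_simp
      ring

/-- If `G` is a `d`-circuit (`G` is not `d`-independent but every proper
subgraph of `G` is `d`-independent), then `G` is `(d+1)`-independent. -/
theorem stmt14 (n d : ℕ) (G : SimpleGraph (Fin n))
    (hdep : ¬ Indep n d G)
    (hproper : ∀ H : SimpleGraph (Fin n), H < G → Indep n d H) :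
    Indep n (d + 1) G := by
  classical
  intro p hp ω hω
  by_contra hω0
  -- `G` has an edge, since the empty graph is independent
  obtain ⟨a, b, hab⟩ : ∃ a b, G.Adj a b := by
    by_contra hno
    push_neg at hno
    exact hdep fun p' _ ω' hω' => funext fun i => funext fun j => hω'.2.1 i j (hno i j)
  set q : Fin n → Fin d → ℝ := fun i k => p i k.castSucc with hqdef
  have hq : GenericConfig q := generic_proj hp
  have hωq : IsStressOf d G q ω := stress_proj hω
  -- `ω` has full support on the edges of `G`
  have hfull : ∀ i j, G.Adj i j → ω i j ≠ 0 := by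
    by_contra hfs
    push_neg at hfs
    obtain ⟨i0, j0, hadj0, h00⟩ := hfs
    set Hs : SimpleGraph (Fin n) :=
      { Adj := fun i j => G.Adj i j ∧ ω i j ≠ 0
        symm := ⟨fun i j h => ⟨h.1.symm, by rw [hω.1 j i]; exact h.2⟩⟩
        loopless := ⟨fun i h => G.loopless.irrefl i h.1⟩ } with hHs
    have hlt : Hs < G := by
      refine lt_of_le_of_ne (fun i j h => h.1) fun hEq => ?_
      have : Hs.Adj i0 j0 := by rw [hEq]; exact hadj0
      exact this.2 h00
    have hstr : IsStressOf d Hs q ω := by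
      refine ⟨hωq.1, fun i j hna => ?_, hωq.2.2⟩
      by_cases hGa : G.Adj i j
      · by_contra hne2
        exact hna ⟨hGa, hne2⟩
      · exact hωq.2.1 i j hGa
    exact hω0 (hproper Hs hlt q hq ω hstr)
  -- descend to a stress with coefficients in the field generated by the projected coordinates
  set K := IntermediateField.adjoin ℚ (Set.range fun x : Fin n × Fin d => q x.1 x.2) with hK
  have hqK : ∀ i k, q i k ∈ K := fun i k =>
    IntermediateField.subset_adjoin _ _ ⟨(i, k), rfl⟩
  obtain ⟨ω₀, hω₀s, hω₀ne, hω₀K⟩ := descent G q K hqK ω hωq hω0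
  have hsc := scaling hq hproper hωq hω₀s hab hfull
  set c := ω₀ a b / ω a b with hc
  have hcne : c ≠ 0 := by
    intro h0
    apply hω₀ne
    funext i j
    show ω₀ i j = 0
    rw [hsc i j, h0, zero_mul]
  have hω₀ab : ω₀ a b ≠ 0 := by
    rw [hsc a b]
    exact mul_ne_zero hcne (hfull a b hab)
  -- the equilibrium equation of `ω₀` in the last coordinate
  have heq : ∑ j, ω₀ a j * (p j (Fin.last d) - p a (Fin.last d)) = 0 := by
    have h1 := stress_coord hω a (Fin.last d)
    calc ∑ j, ω₀ a j * (p j (Fin.last d) - p a (Fin.last d))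
        = c * ∑ j, ω a j * (p j (Fin.last d) - p a (Fin.last d)) := by
          rw [Finset.mul_sum]
          refine Finset.sum_congr rfl fun j _ => ?_
          rw [hsc a j]; ring
      _ = 0 := by rw [h1, mul_zero]
  -- the subfield generated by all coordinates except `p b (last d)`
  set F := IntermediateField.adjoin ℚ
    (Set.range fun v : {v : Fin n × Fin (d+1) // v ≠ (b, Fin.last d)} => p v.1.1 v.1.2) with hF
  have hqF : ∀ i k, q i k ∈ F := fun i k =>
    IntermediateField.subset_adjoin _ _
      ⟨⟨(i, k.castSucc), fun hvv => (Fin.castSucc_lt_last k).ne (congrArg Prod.snd hvv)⟩, rfl⟩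
  have hKF : K ≤ F := by
    rw [hK, IntermediateField.adjoin_le_iff]
    rintro _ ⟨⟨i, k⟩, rfl⟩
    exact hqF i k
  have hωF : ∀ i j, ω₀ i j ∈ F := fun i j => hKF (hω₀K i j)
  have hhF : ∀ j, j ≠ b → p j (Fin.last d) ∈ F := fun j hj =>
    IntermediateField.subset_adjoin _ _
      ⟨⟨(j, Fin.last d), fun hvv => hj (congrArg Prod.fst hvv)⟩, rfl⟩
  have hane : a ≠ b := G.ne_of_adj hab
  -- isolate `p b (last d)`
  set S := ∑ j ∈ Finset.univ.erase b, ω₀ a j * (p j (Fin.last d) - p a (Fin.last d)) with hS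
  have hsplit : ω₀ a b * (p b (Fin.last d) - p a (Fin.last d)) + S = 0 := by
    have hh := Finset.add_sum_erase Finset.univ
      (fun j => ω₀ a j * (p j (Fin.last d) - p a (Fin.last d))) (Finset.mem_univ b)
    rw [hS]
    linarith [hh, heq]
  have hSF : S ∈ F := by
    rw [hS]
    refine sum_mem fun j hj => mul_mem (hωF a j) (sub_mem ?_ (hhF a hane))
    exact hhF j (Finset.ne_of_mem_erase hj)
  have h2 : p b (Fin.last d) - p a (Fin.last d) = (-S) / ω₀ a b := by
    rw [eq_div_iff hω₀ab]
    linear_combination hsplit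
  have hbF : p b (Fin.last d) ∈ F := by
    have h3 : p b (Fin.last d) = (-S) / ω₀ a b + p a (Fin.last d) := by
      rw [← h2]; ring
    rw [h3]
    exact add_mem (div_mem (neg_mem hSF) (hωF a b)) (hhF a hane)
  exact transcend_contra p hp b (hF ▸ hbF)
end
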